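/- arXiv:1303.5545 — 2 statements merged into one kernel-verified Lean document; each statement's English description precedes it below -/
import Mathlib

section
/- Let S be a finite quantum stop time. For every t ∈ (0,∞] there exists an orthogonal projection E_{S,t} ∈ B(F) such that E_{S,t} ε(f) = ∫_{[0,t]} S(ds) ε(f|_{[0,s)}) ⊗ ε(0|_{[s,∞)}) for all f ∈ L²([0,∞); k). Furthermore, E_{S,s} E_{S,t} = E_{S, s∧t} = E_{S,t} E_{S,s} and S([0,s]) E_{S,∞} = E_{S,s} for all s, t ∈ (0,∞]. -/
/- ------------------------------------------------------------------
Common framework: an abstract axiomatisation of Boson Fock space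
`𝓕 = Γ(L²([0,∞); k))` over `H = L²([0,∞); k)`, quantum stop times,
stop-time integrals (as limits of Riemann sums over the net of finite
partitions of `[0, t] ⊆ [0, ∞]` ordered by refinement), the CCR flow,
and operator cocycles, following Belton–Sinha,
"Stopping the CCR flow and its isometric cocycles".
------------------------------------------------------------------ -/

open Filter MeasureTheory Topology
open scoped ENNReal

noncomputable section

local notation "⟪" x ", " y "⟫" => @inner ℂ _ _ x y

/-- A finite partition `{0 = π₀ < π₁ < ⋯ < π_{n+1} = t}` of `[0, t] ⊆ [0, ∞]`,
encoded as a finite set of points of `[0, ∞]` containing `0` and `t` and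
contained in `[0, t]`. -/
structure StopPartition (t : ℝ≥0∞) where
  pts : Finset ℝ≥0∞
  zero_mem : 0 ∈ pts
  top_mem : t ∈ pts
  mem_le : ∀ s ∈ pts, s ≤ t

namespace StopPartition

variable {t : ℝ≥0∞}

/-- Partitions are (pre)ordered by refinement: `π ≤ π'` iff `π'` refines `π`. -/
instance : Preorder (StopPartition t) where
  le π π' := π.pts ⊆ π'.pts
  le_refl _ := Finset.Subset.refl _
  le_trans _ _ _ h h' := Finset.Subset.trans h h'

/-- The predecessor of `s` in the partition `π`: the largest partition point
strictly less than `s` (and `0` if there is none). -/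
def pred (π : StopPartition t) (s : ℝ≥0∞) : ℝ≥0∞ :=
  (π.pts.filter fun u => u < s).sup id

end StopPartition

variable {H 𝓕 : Type*}
  [NormedAddCommGroup H] [InnerProductSpace ℂ H] [CompleteSpace H]
  [NormedAddCommGroup 𝓕] [InnerProductSpace ℂ 𝓕] [CompleteSpace 𝓕]

/-- An abstract presentation of Boson Fock space `𝓕 ≅ Γ(H)` over
`H = L²([0,∞); k)`, together with the structure maps needed here:
exponential vectors, truncation `f ↦ f·1_{[0,t)}`, the right shifts `θ_t`
and their adjoints, second quantisations `Γ_t` (with `Γ_∞` the projection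
onto `ℂε(0)`, i.e. the second quantisation of `θ_∞ = 0`), and for each
`f ∈ H`, `s ∈ [0,∞]` the "past insertion" operator
`past f s = |ε(f1_{[0,s)})⟩⟨ε(0)| ⊗ I_{[s}` on `𝓕 ≅ 𝓕_{s)} ⊗ 𝓕_{[s}`, which
maps a future-adapted vector `ε(0|_{[0,s)}) ⊗ x` to `ε(f|_{[0,s)}) ⊗ x`. -/
structure FockSpec (H 𝓕 : Type*) [NormedAddCommGroup H] [InnerProductSpace ℂ H]
    [CompleteSpace H] [NormedAddCommGroup 𝓕] [InnerProductSpace ℂ 𝓕] [CompleteSpace 𝓕] where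
  /-- the exponential vectors -/
  eV : H → 𝓕
  inner_eV : ∀ f g : H, ⟪eV f, eV g⟫ = Complex.exp ⟪f, g⟫
  dense_eV : Dense (Submodule.span ℂ (Set.range eV) : Set 𝓕)
  /-- `cut t` is multiplication by the indicator of `[0, t)`, `f ↦ f|_{[0,t)}` -/
  cut : ℝ≥0∞ → H →L[ℂ] H
  cut_zero : cut 0 = 0
  cut_top : cut ⊤ = ContinuousLinearMap.id ℂ H
  cut_sa : ∀ (t : ℝ≥0∞) (f g : H), ⟪cut t f, g⟫ = ⟪f, cut t g⟫
  cut_min : ∀ (s u : ℝ≥0∞) (f : H), cut s (cut u f) = cut (min s u) f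
  /-- the isometric right shift `θ_t`, with `θ_∞ = 0` -/
  shift : ℝ≥0∞ → H →L[ℂ] H
  shift_top : shift ⊤ = 0
  shift_inner : ∀ t : ℝ≥0∞, t ≠ ⊤ → ∀ f g : H, ⟪shift t f, shift t g⟫ = ⟪f, g⟫
  shift_add : ∀ (s u : ℝ≥0∞) (f : H), shift s (shift u f) = shift (s + u) f
  cut_shift : ∀ (t : ℝ≥0∞) (f : H), cut t (shift t f) = 0
  /-- `shiftL t = θ_t^*`, i.e. `f ↦ f(· + t)` -/
  shiftL : ℝ≥0∞ → H →L[ℂ] H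
  shiftL_adj : ∀ (t : ℝ≥0∞) (f g : H), ⟪shift t f, g⟫ = ⟪f, shiftL t g⟫
  /-- the second quantisation `Γ_t : ε(f) ↦ ε(θ_t f)`;  `Γ_∞` is the orthogonal
  projection onto `ℂ ε(0)` -/
  Gam : ℝ≥0∞ → 𝓕 →L[ℂ] 𝓕
  Gam_eV : ∀ (t : ℝ≥0∞) (f : H), Gam t (eV f) = eV (shift t f)
  /-- `GamL t = Γ_t^*` -/
  GamL : ℝ≥0∞ → 𝓕 →L[ℂ] 𝓕
  GamL_eV : ∀ t : ℝ≥0∞, t ≠ ⊤ → ∀ f : H, GamL t (eV f) = eV (shiftL t f)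
  GamL_adj : ∀ (t : ℝ≥0∞) (x y : 𝓕), ⟪Gam t x, y⟫ = ⟪x, GamL t y⟫
  /-- past insertion: on `𝓕 ≅ 𝓕_{s)} ⊗ 𝓕_{[s}`,
  `past f s = |ε(f|_{[0,s)})⟩⟨ε(0|_{[0,s)})| ⊗ I_{[s}`; it maps `ε(0|_{[0,s)}) ⊗ x`
  to `ε(f|_{[0,s)}) ⊗ x` -/
  past : H → ℝ≥0∞ → 𝓕 →L[ℂ] 𝓕
  past_eV : ∀ (f : H) (s : ℝ≥0∞) (g : H), past f s (eV g) = eV (cut s f + g - cut s g)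
  /-- `projE t = E_t`, the second quantisation of `cut t`: the orthogonal projection
  onto `𝓕_{t)} ⊗ ε(0|_{[t,∞)})` -/
  projE : ℝ≥0∞ → 𝓕 →L[ℂ] 𝓕
  projE_eV : ∀ (t : ℝ≥0∞) (f : H), projE t (eV f) = eV (cut t f)

namespace FockSpec

variable (E : FockSpec H 𝓕)

/-- `X ∈ B(𝓕_{t)}) ⊗ I_{[t}`, expressed through the factorisation of matrix
elements between exponential vectors. -/
def AdaptedAt (X : 𝓕 →L[ℂ] 𝓕) (t : ℝ≥0∞) : Prop :=
  ∀ f g : H, ⟪E.eV f, X (E.eV g)⟫ =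
    ⟪E.eV (E.cut t f), X (E.eV (E.cut t g))⟫ * Complex.exp ⟪f - E.cut t f, g - E.cut t g⟫

/-- `F : [0, t] → 𝓕` is future adapted: `F(s) = ε(0|_{[0,s)}) ⊗ F_s ∈
ε(0|_{[0,s)}) ⊗ 𝓕_{[s}` for all `s ∈ (0, t]` (the value at `s = ∞`, when `t = ∞`,
being fixed by the same requirement). -/
def FutureAdapted (t : ℝ≥0∞) (F : ℝ≥0∞ → 𝓕) : Prop :=
  ∀ s : ℝ≥0∞, 0 < s → s ≤ t → E.past 0 s (F s) = F s

end FockSpec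

/-- `F` is bounded on `[0, t]`. -/
def BddOn {𝓕 : Type*} [NormedAddCommGroup 𝓕] (t : ℝ≥0∞) (F : ℝ≥0∞ → 𝓕) : Prop :=
  ∃ C : ℝ, ∀ s ≤ t, ‖F s‖ ≤ C

/-- A quantum stop time: a spectral measure on the Borel sets of `[0, ∞]`,
with values orthogonal projections on `𝓕`, which is identity adapted; we impose
throughout (as in the paper) that `S({0}) = 0`. -/
structure QST (E : FockSpec H 𝓕) where
  meas : Set ℝ≥0∞ → 𝓕 →L[ℂ] 𝓕
  sa : ∀ A : Set ℝ≥0∞, IsSelfAdjoint (meas A)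
  idem : ∀ A : Set ℝ≥0∞, meas A ∘L meas A = meas A
  /-- condition (ii): `A ↦ ⟨x, S(A) y⟩` is a complex measure -/
  cm : 𝓕 → 𝓕 → MeasureTheory.ComplexMeasure ℝ≥0∞
  cm_apply : ∀ (x y : 𝓕) (A : Set ℝ≥0∞), MeasurableSet A → cm x y A = ⟪x, meas A y⟫
  total : meas Set.univ = 1
  adapted : ∀ t : ℝ≥0∞, t ≠ ⊤ → E.AdaptedAt (meas {s | s ≤ t}) t
  zero : meas {0} = 0

namespace QST

variable {E : FockSpec H 𝓕}

/-- A quantum stop time is finite when `S({∞}) = 0`. -/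
def Finite (S : QST E) : Prop := S.meas {⊤} = 0

/-- The Riemann sum `Σ_{j=1}^{n+1} S((π_{j-1}, π_j]) v(π_j)` associated with a
partition `π` of `[0, t]` and an integrand `v`. -/
def sum (S : QST E) {t : ℝ≥0∞} (v : ℝ≥0∞ → 𝓕) (π : StopPartition t) : 𝓕 :=
  ∑ s ∈ π.pts.erase 0, S.meas (Set.Ioc (π.pred s) s) (v s)

end QST

variable {E : FockSpec H 𝓕}

/-- The integral of a complex function against a complex measure, via the Jordan
decompositions of its real and imaginary parts. -/
def cintegral (μ : MeasureTheory.ComplexMeasure ℝ≥0∞) (φ : ℝ≥0∞ → ℂ) : ℂ :=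
  ((∫ s, φ s ∂(MeasureTheory.ComplexMeasure.re μ).toJordanDecomposition.posPart) -
      ∫ s, φ s ∂(MeasureTheory.ComplexMeasure.re μ).toJordanDecomposition.negPart) +
    Complex.I * ((∫ s, φ s ∂(MeasureTheory.ComplexMeasure.im μ).toJordanDecomposition.posPart) -
      ∫ s, φ s ∂(MeasureTheory.ComplexMeasure.im μ).toJordanDecomposition.negPart)

/-- `∫_{[0,t]} φ(s) S^{f,g}(ds)`, where `S^{f,g}` is the finite Borel measure on
`[0, ∞]` with `S^{f,g}(A) = ∫_A exp(-∫_s^∞ ⟨f(r), g(r)⟩ dr) ⟨ε(f), S(ds) ε(g)⟩`;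
here `∫_s^∞ ⟨f(r), g(r)⟩ dr = ⟪f - f|_{[0,s)}, g - g|_{[0,s)}⟫`. -/
def QST.sfgIntegral (S : QST E) (f g : H) (t : ℝ≥0∞) (φ : ℝ≥0∞ → ℂ) : ℂ :=
  cintegral (S.cm (E.eV f) (E.eV g))
    (Set.indicator {s | s ≤ t}
      fun s => φ s * Complex.exp (-⟪f - E.cut s f, g - E.cut s g⟫))

/-- `ESt` is the family `(E_{S,t})_{t ∈ (0,∞]}` of time projections of `S`:
each `E_{S,t}` is an orthogonal projection and
`E_{S,t} ε(f) = ∫_{[0,t]} S(ds) ε(f|_{[0,s)}) ⊗ ε(0|_{[s,∞)})`. -/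
def IsTimeProj (S : QST E) (ESt : ℝ≥0∞ → 𝓕 →L[ℂ] 𝓕) : Prop :=
  ∀ t : ℝ≥0∞, 0 < t →
    IsSelfAdjoint (ESt t) ∧ ESt t ∘L ESt t = ESt t ∧
      ∀ f : H,
        Tendsto (fun π : StopPartition t => S.sum (fun s => E.past f s (E.eV 0)) π) atTop
          (𝓝 (ESt t (E.eV f)))

/-- `ΓS` is the stopped right shift of `S`:
`Γ_S x = ∫_{[0,∞]} S(ds) ε(0|_{[0,s)}) ⊗ Γ_s x`. -/
def IsStoppedShift (S : QST E) (ΓS : 𝓕 →L[ℂ] 𝓕) : Prop :=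
  ∀ x : 𝓕, Tendsto (fun π : StopPartition ⊤ => S.sum (fun s => E.Gam s x) π) atTop (𝓝 (ΓS x))

/-- `j` encodes the isometric isomorphism `j_S : 𝓕_{S)} ⊗ 𝓕_{[S} → 𝓕` of the
abstract strong Markov property, as a bilinear map on `𝓕 × 𝓕` (precomposed with
`E_S = E_{S,∞}` and `Γ_S` in the two arguments): it satisfies
`j_S(E_{S,t} ε(f) ⊗ Γ_S x) = ∫_{[0,t]} S(ds) ε(f|_{[0,s)}) ⊗ Γ_s x`, is isometric
for the tensor inner product, and has dense (hence, being isometric, full) range. -/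
def IsJS (S : QST E) (ESt : ℝ≥0∞ → 𝓕 →L[ℂ] 𝓕) (ΓS : 𝓕 →L[ℂ] 𝓕)
    (j : 𝓕 →ₗ[ℂ] 𝓕 →ₗ[ℂ] 𝓕) : Prop :=
  (∀ t : ℝ≥0∞, 0 < t → ∀ (f : H) (x : 𝓕),
      Tendsto (fun π : StopPartition t => S.sum (fun s => E.past f s (E.Gam s x)) π) atTop
        (𝓝 (j (ESt t (E.eV f)) (ΓS x)))) ∧
    (∀ a b x y : 𝓕,
      ⟪j (ESt ⊤ a) (ΓS x), j (ESt ⊤ b) (ΓS y)⟫ = ⟪ESt ⊤ a, ESt ⊤ b⟫ * ⟪ΓS x, ΓS y⟫) ∧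
    Dense (Submodule.span ℂ {z : 𝓕 | ∃ a x : 𝓕, z = j (ESt ⊤ a) (ΓS x)} : Set 𝓕)

/-- A spectral measure on the Borel sets of `[0, ∞]²`. -/
def IsSpectralProd (P : Set (ℝ≥0∞ × ℝ≥0∞) → 𝓕 →L[ℂ] 𝓕) : Prop :=
  (∀ A, IsSelfAdjoint (P A)) ∧ (∀ A, P A ∘L P A = P A) ∧ P Set.univ = 1 ∧
    ∀ A : ℕ → Set (ℝ≥0∞ × ℝ≥0∞), (∀ n, MeasurableSet (A n)) →
      Pairwise (Function.onFun Disjoint A) → ∀ x y : 𝓕,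
        HasSum (fun n => ⟪x, P (A n) y⟫) ⟪x, P (⋃ n, A n) y⟫

/-- `P` is the product spectral measure `S ⊗ T` on `[0, ∞]²`, determined on
rectangles by `(S ⊗ T)(A × B) = j_S (S(A) ⊗ Γ_S T(B) Γ_S^*) j_S^*`. -/
def IsProdOf (S T : QST E) (ESt : ℝ≥0∞ → 𝓕 →L[ℂ] 𝓕) (ΓS : 𝓕 →L[ℂ] 𝓕)
    (jS : 𝓕 →ₗ[ℂ] 𝓕 →ₗ[ℂ] 𝓕) (P : Set (ℝ≥0∞ × ℝ≥0∞) → 𝓕 →L[ℂ] 𝓕) : Prop :=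
  IsSpectralProd P ∧
    ∀ A B : Set ℝ≥0∞, MeasurableSet A → MeasurableSet B → ∀ a y : 𝓕,
      P (A ×ˢ B) (jS (ESt ⊤ a) (ΓS y)) = jS (S.meas A (ESt ⊤ a)) (ΓS (T.meas B y))

/-- `ST` is the convolution `S ⋆ T`:
`(S ⋆ T)(C) = (S ⊗ T)({(s, u) : s + u ∈ C})`. -/
def IsConvOf (S T : QST E) (ESt : ℝ≥0∞ → 𝓕 →L[ℂ] 𝓕) (ΓS : 𝓕 →L[ℂ] 𝓕)
    (jS : 𝓕 →ₗ[ℂ] 𝓕 →ₗ[ℂ] 𝓕) (ST : QST E) : Prop :=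
  ∃ P : Set (ℝ≥0∞ × ℝ≥0∞) → 𝓕 →L[ℂ] 𝓕, IsProdOf S T ESt ΓS jS P ∧
    ∀ C : Set ℝ≥0∞, MeasurableSet C → ST.meas C = P {p | p.1 + p.2 ∈ C}

/-- A Borel measurable, bounded, future-adapted integrand on `[0, t]`. -/
def MeasIntegrand [MeasurableSpace 𝓕] (E : FockSpec H 𝓕) (t : ℝ≥0∞)
    (F : ℝ≥0∞ → 𝓕) : Prop :=
  Measurable F ∧ BddOn t F ∧ E.FutureAdapted t F

/-- `Int` is a stop-time integral for `S`: `Int t f F` plays the role of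
`∫_{[0,t]} S(ds) ε(f|_{[0,s)}) ⊗ F_s` for Borel measurable, bounded,
future-adapted `F`, satisfying the inner-product and projection identities and
extending the Riemann-sum limit for continuous integrands. -/
def IsStopIntegral [MeasurableSpace 𝓕] (E : FockSpec H 𝓕) (S : QST E)
    (Int : ℝ≥0∞ → H → (ℝ≥0∞ → 𝓕) → 𝓕) : Prop :=
  (∀ (t : ℝ≥0∞) (f g : H) (F G : ℝ≥0∞ → 𝓕), MeasIntegrand E t F → MeasIntegrand E t G →
      ⟪Int t f F, Int t g G⟫ = S.sfgIntegral f g t fun s => ⟪F s, G s⟫) ∧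
    (∀ (t : ℝ≥0∞) (f : H) (F : ℝ≥0∞ → 𝓕), MeasIntegrand E t F → ∀ r : ℝ≥0∞, 0 < r →
      S.meas {s | s ≤ r} (Int t f F) = Int (min r t) f F) ∧
    (∀ (t : ℝ≥0∞) (f : H) (F : ℝ≥0∞ → 𝓕), MeasIntegrand E t F →
      ContinuousOn F {s | s ≤ t} →
        Tendsto (fun π : StopPartition t => S.sum (fun s => E.past f s (F s)) π) atTop
          (𝓝 (Int t f F)))

/-- `σ` is the CCR flow: `σ_t(X) = I_{t)} ⊗ Γ_t X Γ_t^*` for `t ∈ [0, ∞)`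
(expressed through matrix elements between exponential vectors), and `σ_∞ ≡ I`. -/
def IsCCRFlow (E : FockSpec H 𝓕) (σ : ℝ≥0∞ → (𝓕 →L[ℂ] 𝓕) → 𝓕 →L[ℂ] 𝓕) : Prop :=
  (∀ s : ℝ≥0∞, s ≠ ⊤ → ∀ (X : 𝓕 →L[ℂ] 𝓕) (f g : H),
      ⟪E.eV f, σ s X (E.eV g)⟫ =
        Complex.exp ⟪E.cut s f, E.cut s g⟫ *
          ⟪E.eV (E.shiftL s f), X (E.eV (E.shiftL s g))⟫) ∧
    ∀ X : 𝓕 →L[ℂ] 𝓕, σ ⊤ X = 1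

/-- The Riemann sum `σ_{S,π}(X) = Σ_{j=1}^{n+1} σ_{π_j}(X) S((π_{j-1}, π_j])`. -/
def QST.flowSum (S : QST E) (σ : ℝ≥0∞ → (𝓕 →L[ℂ] 𝓕) → 𝓕 →L[ℂ] 𝓕)
    (X : 𝓕 →L[ℂ] 𝓕) (π : StopPartition (⊤ : ℝ≥0∞)) : 𝓕 →L[ℂ] 𝓕 :=
  ∑ s ∈ π.pts.erase 0, σ s X ∘L S.meas (Set.Ioc (π.pred s) s)

/-- `σS` is the stopped CCR flow `σ_S`: for every `X`, `σ_S(X)` is the limit of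
`σ_{S,π}(X)` in the strong operator topology as `π` is refined. -/
def IsStoppedFlow (S : QST E) (σ : ℝ≥0∞ → (𝓕 →L[ℂ] 𝓕) → 𝓕 →L[ℂ] 𝓕)
    (σS : (𝓕 →L[ℂ] 𝓕) → 𝓕 →L[ℂ] 𝓕) : Prop :=
  ∀ (X : 𝓕 →L[ℂ] 𝓕) (x : 𝓕),
    Tendsto (fun π : StopPartition ⊤ => S.flowSum σ X π x) atTop (𝓝 (σS X x))

variable {h 𝓚 : Type*}
  [NormedAddCommGroup h] [InnerProductSpace ℂ h] [CompleteSpace h]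
  [NormedAddCommGroup 𝓚] [InnerProductSpace ℂ 𝓚] [CompleteSpace 𝓚]

/-- An abstract presentation of the Hilbert-space tensor product `𝓚 = h ⊗ 𝓕` of
the initial space `h` and Fock space `𝓕`, with the ampliations
`X ↦ I_h ⊗ X` of `B(𝓕)` and `B ↦ B ⊗ I_𝓕` of `B(h)`. -/
structure AmpSpec (𝓕 h 𝓚 : Type*) [NormedAddCommGroup 𝓕] [InnerProductSpace ℂ 𝓕]
    [CompleteSpace 𝓕] [NormedAddCommGroup h] [InnerProductSpace ℂ h] [CompleteSpace h]
    [NormedAddCommGroup 𝓚] [InnerProductSpace ℂ 𝓚] [CompleteSpace 𝓚] where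
  tens : h →ₗ[ℂ] 𝓕 →ₗ[ℂ] 𝓚
  inner_tens : ∀ (u v : h) (x y : 𝓕), ⟪tens u x, tens v y⟫ = ⟪u, v⟫ * ⟪x, y⟫
  dense_tens : Dense (Submodule.span ℂ {z : 𝓚 | ∃ u x, z = tens u x} : Set 𝓚)
  amp : (𝓕 →L[ℂ] 𝓕) → 𝓚 →L[ℂ] 𝓚
  amp_tens : ∀ (X : 𝓕 →L[ℂ] 𝓕) (u : h) (x : 𝓕), amp X (tens u x) = tens u (X x)
  ampH : (h →L[ℂ] h) → 𝓚 →L[ℂ] 𝓚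
  ampH_tens : ∀ (B : h →L[ℂ] h) (u : h) (x : 𝓕), ampH B (tens u x) = tens (B u) x

/-- `X ∈ M ⊗̄ B(𝓕)` for the von Neumann algebra `M ⊆ B(h)`: `X` commutes with
`B ⊗ I_𝓕` for every `B` in the commutant of `M`. -/
def InVNTensor (A : AmpSpec 𝓕 h 𝓚) (M : Set (h →L[ℂ] h)) (X : 𝓚 →L[ℂ] 𝓚) : Prop :=
  ∀ B : h →L[ℂ] h, (∀ Y ∈ M, B ∘L Y = Y ∘L B) → X ∘L A.ampH B = A.ampH B ∘L X

/-- `V` is a `p`-adapted process: `V_t = V_{t)} ⊗ P_{[t}`, where `P_{[t}` is the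
second quantisation of the pointwise action `pH` of the projection `p` on
`L²([t,∞); k)`; expressed through matrix elements between exponential vectors. -/
def PAdapted (E : FockSpec H 𝓕) (A : AmpSpec 𝓕 h 𝓚) (pH : H →L[ℂ] H)
    (V : ℝ≥0∞ → 𝓚 →L[ℂ] 𝓚) : Prop :=
  ∀ t : ℝ≥0∞, t ≠ ⊤ → ∀ (u v : h) (f g : H),
    ⟪A.tens u (E.eV f), V t (A.tens v (E.eV g))⟫ =
      ⟪A.tens u (E.eV (E.cut t f)), V t (A.tens v (E.eV (E.cut t g)))⟫ *
        Complex.exp ⟪f - E.cut t f, pH (g - E.cut t g)⟫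

/-- `Vhat` is the identity-adapted projection `V̂` of the `p`-adapted process `V`:
`V̂_t = V_{t)} ⊗ I_{[t}`. -/
def IsHatOf (E : FockSpec H 𝓕) (A : AmpSpec 𝓕 h 𝓚)
    (V Vhat : ℝ≥0∞ → 𝓚 →L[ℂ] 𝓚) : Prop :=
  ∀ t : ℝ≥0∞, t ≠ ⊤ → ∀ (u v : h) (f g : H),
    ⟪A.tens u (E.eV f), Vhat t (A.tens v (E.eV g))⟫ =
      ⟪A.tens u (E.eV (E.cut t f)), V t (A.tens v (E.eV (E.cut t g)))⟫ *
        Complex.exp ⟪f - E.cut t f, g - E.cut t g⟫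

/-- The process is isometric: `V_{t)}^* V_{t)} = I`, i.e. `V̂_t` is isometric. -/
def IsometricHat (Vhat : ℝ≥0∞ → 𝓚 →L[ℂ] 𝓚) : Prop :=
  ∀ t : ℝ≥0∞, t ≠ ⊤ → ∀ z : 𝓚, ‖Vhat t z‖ = ‖z‖

/-- `Sig` is the CCR flow extended by ampliation to `B(h ⊗ 𝓕)`. -/
def IsAmpCCRFlow (E : FockSpec H 𝓕) (A : AmpSpec 𝓕 h 𝓚)
    (Sig : ℝ≥0∞ → (𝓚 →L[ℂ] 𝓚) → 𝓚 →L[ℂ] 𝓚) : Prop :=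
  ∀ s : ℝ≥0∞, s ≠ ⊤ → ∀ (X : 𝓚 →L[ℂ] 𝓚) (u v : h) (f g : H),
    ⟪A.tens u (E.eV f), Sig s X (A.tens v (E.eV g))⟫ =
      Complex.exp ⟪E.cut s f, E.cut s g⟫ *
        ⟪A.tens u (E.eV (E.shiftL s f)), X (A.tens v (E.eV (E.shiftL s g)))⟫

/-- The (left operator Markovian) cocycle identity `V_{s+t} = V̂_s σ_s(V_t)`. -/
def IsLeftCocycle (Sig : ℝ≥0∞ → (𝓚 →L[ℂ] 𝓚) → 𝓚 →L[ℂ] 𝓚)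
    (V Vhat : ℝ≥0∞ → 𝓚 →L[ℂ] 𝓚) : Prop :=
  ∀ s t : ℝ≥0∞, s ≠ ⊤ → t ≠ ⊤ → V (s + t) = Vhat s ∘L Sig s (V t)

/-- Strong continuity of the process on `[0, ∞)`. -/
def StrongContOn (V : ℝ≥0∞ → 𝓚 →L[ℂ] 𝓚) : Prop :=
  ∀ z : 𝓚, ContinuousOn (fun t => V t z) {t : ℝ≥0∞ | t ≠ ⊤}

/-- The Riemann sum `V_{S,π} = Σ_{j=1}^{n+1} V_{π_j} S((π_{j-1}, π_j])`, with the
stop time `S` extended by ampliation to `h ⊗ 𝓕`. -/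
def VSum {E : FockSpec H 𝓕} (A : AmpSpec 𝓕 h 𝓚) (S : QST E) {t : ℝ≥0∞}
    (V : ℝ≥0∞ → 𝓚 →L[ℂ] 𝓚) (π : StopPartition t) : 𝓚 →L[ℂ] 𝓚 :=
  ∑ s ∈ π.pts.erase 0, V s ∘L A.amp (S.meas (Set.Ioc (π.pred s) s))


namespace StopPartition

variable {t : ℝ≥0∞}

lemma le_def {π π' : StopPartition t} : π ≤ π' ↔ π.pts ⊆ π'.pts := Iff.rfl

instance : PartialOrder (StopPartition t) :=
  { (inferInstance : Preorder (StopPartition t)) with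
    le_antisymm := fun π π' h h' => by
      cases π; cases π'
      simp only [StopPartition.mk.injEq]
      exact Finset.Subset.antisymm h h' }

instance : SemilatticeSup (StopPartition t) :=
  { (inferInstance : PartialOrder (StopPartition t)) with
    sup := fun π π' => ⟨π.pts ∪ π'.pts, Finset.mem_union_left _ π.zero_mem,
      Finset.mem_union_left _ π.top_mem,
      fun s hs => by
        rcases Finset.mem_union.1 hs with h | h
        · exact π.mem_le s h
        · exact π'.mem_le s h⟩
    le_sup_left := fun π π' => Finset.subset_union_left
    le_sup_right := fun π π' => Finset.subset_union_right
    sup_le := fun π π' σ h h' => Finset.union_subset h h' }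

instance : Nonempty (StopPartition t) :=
  ⟨⟨{0, t}, Finset.mem_insert_self _ _,
    Finset.mem_insert_of_mem (Finset.mem_singleton_self _),
    fun s hs => by
      rcases Finset.mem_insert.1 hs with rfl | hs
      · exact zero_le
      · exact le_of_eq (Finset.mem_singleton.1 hs)⟩⟩

variable {π : StopPartition t} {s r : ℝ≥0∞}

lemma pos_of_mem_erase (hs : s ∈ π.pts.erase 0) : 0 < s :=
  pos_iff_ne_zero.mpr (Finset.ne_of_mem_erase hs)

lemma mem_of_mem_erase (hs : s ∈ π.pts.erase 0) : s ∈ π.pts :=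
  Finset.mem_of_mem_erase hs

lemma le_top_of_mem_erase (hs : s ∈ π.pts.erase 0) : s ≤ t :=
  π.mem_le s (mem_of_mem_erase hs)

lemma pred_lt (hs : 0 < s) : π.pred s < s := by
  rw [StopPartition.pred]
  exact (Finset.sup_lt_iff hs).2 fun b hb => (Finset.mem_filter.1 hb).2

lemma pred_mem (hs : 0 < s) : π.pred s ∈ π.pts := by
  obtain ⟨b, hb, h⟩ := Finset.exists_mem_eq_sup (π.pts.filter fun u => u < s)
    ⟨0, Finset.mem_filter.2 ⟨π.zero_mem, hs⟩⟩ id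
  rw [StopPartition.pred, h]
  exact (Finset.mem_filter.1 hb).1

lemma le_pred (hu : r ∈ π.pts) (hr : r < s) : r ≤ π.pred s :=
  Finset.le_sup (f := id) (Finset.mem_filter.2 ⟨hu, hr⟩)

/-- The smallest partition point `≥ r`. -/
def next (π : StopPartition t) (r : ℝ≥0∞) : ℝ≥0∞ :=
  (π.pts.filter fun u => r ≤ u).inf id

lemma le_next (hr : r ≤ t) : r ≤ π.next r :=
  Finset.le_inf fun b hb => (Finset.mem_filter.1 hb).2

lemma next_mem (hr : r ≤ t) : π.next r ∈ π.pts := by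
  obtain ⟨b, hb, h⟩ := Finset.exists_mem_eq_inf (π.pts.filter fun u => r ≤ u)
    ⟨t, Finset.mem_filter.2 ⟨π.top_mem, hr⟩⟩ id
  rw [next, h]
  exact (Finset.mem_filter.1 hb).1

lemma next_le (hu : s ∈ π.pts) (hr : r ≤ s) : π.next r ≤ s :=
  Finset.inf_le (f := id) (Finset.mem_filter.2 ⟨hu, hr⟩)

lemma next_mem_erase (hr0 : 0 < r) (hr : r ≤ t) : π.next r ∈ π.pts.erase 0 := by
  refine Finset.mem_erase.2 ⟨fun h => ?_, next_mem hr⟩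
  have h2 := le_next (π := π) hr
  rw [h] at h2
  exact pos_iff_ne_zero.1 hr0 (le_zero_iff.1 h2)

lemma pred_next_lt (hr0 : 0 < r) (hr : r ≤ t) : π.pred (π.next r) < r := by
  rw [StopPartition.pred]
  refine (Finset.sup_lt_iff hr0).2 fun b hb => ?_
  rcases Finset.mem_filter.1 hb with ⟨hbm, hbl⟩
  by_contra h
  exact absurd (next_le hbm (not_lt.1 h)) (not_le.2 hbl)

end StopPartition

section Ops

variable {H' 𝓕' : Type*}
  [NormedAddCommGroup H'] [InnerProductSpace ℂ H'] [CompleteSpace H']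
  [NormedAddCommGroup 𝓕'] [InnerProductSpace ℂ 𝓕'] [CompleteSpace 𝓕']
  {E : FockSpec H' 𝓕'} (S : QST E)

lemma op_ext {T U : 𝓕' →L[ℂ] 𝓕'} (h : ∀ x y, ⟪x, T y⟫ = ⟪x, U y⟫) : T = U :=
  ContinuousLinearMap.ext fun y => ext_inner_left ℂ fun x => h x y

lemma QST.inner_meas (A : Set ℝ≥0∞) (x y : 𝓕') :
    ⟪S.meas A x, y⟫ = ⟪x, S.meas A y⟫ := by
  have h := ContinuousLinearMap.isSelfAdjoint_iff'.1 (S.sa A)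
  conv_lhs => rw [← h]
  exact ContinuousLinearMap.adjoint_inner_left _ y x

lemma QST.meas_union {A B : Set ℝ≥0∞} (hA : MeasurableSet A) (hB : MeasurableSet B)
    (hd : Disjoint A B) : S.meas (A ∪ B) = S.meas A + S.meas B := by
  apply op_ext; intro x y
  have h1 := S.cm_apply x y A hA
  have h2 := S.cm_apply x y B hB
  have h3 := S.cm_apply x y (A ∪ B) (hA.union hB)
  have h4 := MeasureTheory.VectorMeasure.of_union (v := S.cm x y) hd hA hB
  rw [h1, h2, h3] at h4
  rw [h4, ContinuousLinearMap.add_apply, inner_add_right]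

lemma proj_comp_eq_zero {P Q : 𝓕' →L[ℂ] 𝓕'} (hP : P ∘L P = P) (hQ : Q ∘L Q = Q)
    (hS : (P + Q) ∘L (P + Q) = P + Q)
    (hPsa : ∀ x y : 𝓕', ⟪P x, y⟫ = ⟪x, P y⟫)
    (hQsa : ∀ x y : 𝓕', ⟪Q x, y⟫ = ⟪x, Q y⟫) : P ∘L Q = 0 := by
  have hPQ : P ∘L Q + Q ∘L P = 0 := by
    have h0 : P ∘L P + P ∘L Q + (Q ∘L P + Q ∘L Q) = P + Q := by
      rw [← hS, ContinuousLinearMap.add_comp, ContinuousLinearMap.comp_add,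
        ContinuousLinearMap.comp_add]
    rw [hP, hQ] at h0
    calc P ∘L Q + Q ∘L P = P + P ∘L Q + (Q ∘L P + Q) - P - Q := by abel
      _ = (P + Q) - P - Q := by rw [h0]
      _ = 0 := by abel
  have hQP : Q ∘L P = -(P ∘L Q) := eq_neg_of_add_eq_zero_right hPQ
  ext x
  simp only [ContinuousLinearMap.comp_apply, ContinuousLinearMap.zero_apply]
  set z := ⟪x, P (Q x)⟫ with hz
  have happQP : ∀ y : 𝓕', Q (P y) = -(P (Q y)) := fun y => by
    have := congrArg (fun T => T y) hQP
    simpa using this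
  have happP : ∀ y : 𝓕', P (P y) = P y := fun y => by
    have := congrArg (fun T => T y) hP
    simpa using this
  have happQ : ∀ y : 𝓕', Q (Q y) = Q y := fun y => by
    have := congrArg (fun T => T y) hQ
    simpa using this
  have hskew : (starRingEnd ℂ) z = -z := by
    rw [hz, inner_conj_symm, hPsa, hQsa, happQP, inner_neg_right]
  have hw : ⟪P (Q x), P (Q x)⟫ = -z := by
    calc ⟪P (Q x), P (Q x)⟫ = ⟪Q x, P (P (Q x))⟫ := hPsa _ _
      _ = ⟪Q x, P (Q x)⟫ := by rw [happP]
      _ = ⟪x, Q (P (Q x))⟫ := hQsa _ _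
      _ = -z := by rw [happQP, happQ, inner_neg_right]
  have hreal : (starRingEnd ℂ) ⟪P (Q x), P (Q x)⟫ = ⟪P (Q x), P (Q x)⟫ :=
    inner_conj_symm _ _
  have h6 : (starRingEnd ℂ) z = z := by
    have h := hreal
    rw [hw, map_neg] at h
    exact neg_injective h
  have h7 : z = -z := by conv_lhs => rw [← h6, hskew]
  have hzz : z = 0 := by
    have : z + z = 0 := by nth_rw 2 [h7]; exact add_neg_cancel z
    exact add_self_eq_zero.1 this
  have : ⟪P (Q x), P (Q x)⟫ = 0 := by rw [hw, hzz, neg_zero]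
  exact inner_self_eq_zero.1 this

lemma QST.meas_comp_of_disjoint {A B : Set ℝ≥0∞} (hA : MeasurableSet A)
    (hB : MeasurableSet B) (hd : Disjoint A B) : S.meas A ∘L S.meas B = 0 :=
  proj_comp_eq_zero (S.idem A) (S.idem B)
    (by rw [← S.meas_union hA hB hd]; exact S.idem _)
    (S.inner_meas A) (S.inner_meas B)

lemma QST.meas_comp_of_subset {A B : Set ℝ≥0∞} (hA : MeasurableSet A)
    (hB : MeasurableSet B) (hsub : A ⊆ B) :
    S.meas A ∘L S.meas B = S.meas A ∧ S.meas B ∘L S.meas A = S.meas A := by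
  have hu : A ∪ (B \ A) = B := Set.union_diff_cancel hsub
  have hmB : S.meas B = S.meas A + S.meas (B \ A) := by
    conv_lhs => rw [← hu]
    exact S.meas_union hA (hB.diff hA) Set.disjoint_sdiff_right
  have hd : Disjoint A (B \ A) := Set.disjoint_sdiff_right
  constructor
  · rw [hmB, ContinuousLinearMap.comp_add, S.idem,
      S.meas_comp_of_disjoint hA (hB.diff hA) hd, add_zero]
  · rw [hmB, ContinuousLinearMap.add_comp, S.idem,
      S.meas_comp_of_disjoint (hB.diff hA) hA hd.symm, add_zero]

lemma QST.meas_Iic_split {a u : ℝ≥0∞} (hau : a ≤ u) :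
    S.meas (Set.Iic u) = S.meas (Set.Iic a) + S.meas (Set.Ioc a u) := by
  rw [← S.meas_union measurableSet_Iic measurableSet_Ioc (Set.Iic_disjoint_Ioc le_rfl),
    Set.Iic_union_Ioc_eq_Iic hau]

lemma QST.meas_Iic_zero : S.meas (Set.Iic 0) = 0 := by
  have : (Set.Iic (0 : ℝ≥0∞)) = {0} := Set.ext fun x => by
    simp [Set.mem_Iic, nonpos_iff_eq_zero]
  rw [this, S.zero]

lemma QST.meas_Iic_top : S.meas (Set.Iic (⊤ : ℝ≥0∞)) = 1 := by
  rw [Set.Iic_top, S.total]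

end Ops

section Main

variable {H' 𝓕' : Type*}
  [NormedAddCommGroup H'] [InnerProductSpace ℂ H'] [CompleteSpace H']
  [NormedAddCommGroup 𝓕'] [InnerProductSpace ℂ 𝓕'] [CompleteSpace 𝓕']
  (E : FockSpec H' 𝓕') (S : QST E)

/-- `ν_{f,g}(u) = ⟨f, g·1_{[0,u)}⟩`. -/
def nuF (f g : H') (u : ℝ≥0∞) : ℂ := ⟪f, E.cut u g⟫

/-- `μ_{f,g}(u) = e^{-ν(u)} ⟨ε(f|_{[0,u)}), S([0,u]) ε(g|_{[0,u)})⟩`. -/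
def muF (f g : H') (u : ℝ≥0∞) : ℂ :=
  Complex.exp (-(nuF E f g u)) *
    ⟪E.eV (E.cut u f), S.meas (Set.Iic u) (E.eV (E.cut u g))⟫

lemma cut_inner_cut (f g : H') (a b : ℝ≥0∞) :
    ⟪E.cut a f, E.cut b g⟫ = nuF E f g (min a b) := by
  rw [E.cut_sa, E.cut_min, nuF]

lemma inner_eV_meas_Iic (f g : H') {u b b' : ℝ≥0∞} (hub : u ≤ b) (hub' : u ≤ b') :
    ⟪E.eV (E.cut b f), S.meas (Set.Iic u) (E.eV (E.cut b' g))⟫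
      = muF E S f g u * Complex.exp ⟪E.cut b f, E.cut b' g⟫ := by
  by_cases hu : u = ⊤
  · subst hu
    have hb : b = ⊤ := top_le_iff.1 hub
    have hb' : b' = ⊤ := top_le_iff.1 hub'
    subst hb; subst hb'
    rw [muF, nuF, E.cut_top, S.meas_Iic_top]
    simp only [ContinuousLinearMap.one_apply, ContinuousLinearMap.coe_id', id_eq]
    rw [E.inner_eV, ← Complex.exp_add, ← Complex.exp_add]
    congr 1
    ring
  · have had := S.adapted u hu (E.cut b f) (E.cut b' g)
    have hIic : {s : ℝ≥0∞ | s ≤ u} = Set.Iic u := rfl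
    rw [hIic] at had
    rw [E.cut_min, E.cut_min, min_eq_left hub, min_eq_left hub'] at had
    have hexp : ⟪E.cut b f - E.cut u f, E.cut b' g - E.cut u g⟫
        = ⟪E.cut b f, E.cut b' g⟫ - nuF E f g u := by
      rw [inner_sub_left, inner_sub_right, inner_sub_right,
        cut_inner_cut E f g b u, cut_inner_cut E f g u b', cut_inner_cut E f g u u,
        min_eq_right hub, min_eq_left hub', min_self]
      ring
    rw [had, hexp, muF, sub_eq_add_neg, Complex.exp_add]
    ring

lemma inner_eV_meas_Ioc (f g : H') {a u b b' : ℝ≥0∞} (hau : a ≤ u) (hub : u ≤ b)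
    (hub' : u ≤ b') :
    ⟪E.eV (E.cut b f), S.meas (Set.Ioc a u) (E.eV (E.cut b' g))⟫
      = (muF E S f g u - muF E S f g a) * Complex.exp ⟪E.cut b f, E.cut b' g⟫ := by
  have hsplit : S.meas (Set.Ioc a u) = S.meas (Set.Iic u) - S.meas (Set.Iic a) :=
    eq_sub_of_add_eq' (S.meas_Iic_split hau).symm
  rw [hsplit, ContinuousLinearMap.sub_apply, inner_sub_right,
    inner_eV_meas_Iic E S f g hub hub',
    inner_eV_meas_Iic E S f g (hau.trans hub) (hau.trans hub')]
  ring

/-- The master cross-partition formula. -/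
lemma inner_sum_sum {t t' : ℝ≥0∞} (π : StopPartition t) (ρ : StopPartition t')
    (hsub : ρ.pts ⊆ π.pts) (ht'm : t' ∈ π.pts) (f g : H') :
    ⟪S.sum (fun u => E.eV (E.cut u f)) π, S.sum (fun u => E.eV (E.cut u g)) ρ⟫ =
      ∑ r ∈ π.pts.erase 0, (if r ≤ t' then
        (muF E S f g r - muF E S f g (π.pred r)) * Complex.exp (nuF E f g r) else 0) := by
  unfold QST.sum
  rw [sum_inner]
  refine Finset.sum_congr rfl fun r hr => ?_
  have hr0 : 0 < r := StopPartition.pos_of_mem_erase hr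
  rw [inner_sum]
  have hterm : ∀ s ∈ ρ.pts.erase 0,
      ⟪S.meas (Set.Ioc (π.pred r) r) (E.eV (E.cut r f)),
        S.meas (Set.Ioc (ρ.pred s) s) (E.eV (E.cut s g))⟫
      = ⟪E.eV (E.cut r f),
          (S.meas (Set.Ioc (π.pred r) r) ∘L S.meas (Set.Ioc (ρ.pred s) s))
            (E.eV (E.cut s g))⟫ := fun s hs => by
    rw [S.inner_meas (Set.Ioc (π.pred r) r)]; rfl
  by_cases hrt' : r ≤ t'
  · set s₀ := ρ.next r with hs₀
    have hs₀mem : s₀ ∈ ρ.pts.erase 0 := StopPartition.next_mem_erase hr0 hrt'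
    rw [if_pos hrt']
    have hzero : ∀ s ∈ ρ.pts.erase 0, s ≠ s₀ →
        ⟪S.meas (Set.Ioc (π.pred r) r) (E.eV (E.cut r f)),
          S.meas (Set.Ioc (ρ.pred s) s) (E.eV (E.cut s g))⟫ = 0 := by
      intro s hs hne
      have hdisj : Disjoint (Set.Ioc (π.pred r) r) (Set.Ioc (ρ.pred s) s) := by
        rcases lt_or_gt_of_ne hne with hlt | hgt
        · have hsr : s < r := by
            by_contra h
            exact absurd (StopPartition.next_le (StopPartition.mem_of_mem_erase hs) (not_lt.1 h))
              (not_le.2 hlt)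
          have hsp : s ≤ π.pred r :=
            StopPartition.le_pred (hsub (StopPartition.mem_of_mem_erase hs)) hsr
          exact Set.disjoint_left.2 fun x hx hx' =>
            absurd (hx'.2.trans hsp) (not_le.2 hx.1)
        · have h1 : s₀ ≤ ρ.pred s := StopPartition.le_pred (StopPartition.next_mem hrt') hgt
          exact Set.disjoint_left.2 fun x hx hx' =>
            absurd hx'.1 (not_lt.2 (hx.2.trans ((StopPartition.le_next hrt').trans h1)))
      rw [hterm s hs, S.meas_comp_of_disjoint measurableSet_Ioc measurableSet_Ioc hdisj,
        ContinuousLinearMap.zero_apply, inner_zero_right]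
    rw [Finset.sum_eq_single_of_mem s₀ hs₀mem hzero, hterm s₀ hs₀mem]
    have hcont : Set.Ioc (π.pred r) r ⊆ Set.Ioc (ρ.pred s₀) s₀ := by
      have hlt : ρ.pred s₀ < r := StopPartition.pred_next_lt hr0 hrt'
      have h1 : ρ.pred s₀ ≤ π.pred r :=
        StopPartition.le_pred (hsub (StopPartition.pred_mem (StopPartition.pos_of_mem_erase hs₀mem))) hlt
      exact Set.Ioc_subset_Ioc h1 (StopPartition.le_next hrt')
    rw [(S.meas_comp_of_subset measurableSet_Ioc measurableSet_Ioc hcont).1,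
      inner_eV_meas_Ioc E S f g (StopPartition.pred_lt hr0).le le_rfl (StopPartition.le_next hrt'),
      cut_inner_cut, min_eq_left (StopPartition.le_next hrt')]
  · rw [if_neg hrt']
    refine Finset.sum_eq_zero fun s hs => ?_
    have ht'p : t' ≤ π.pred r := StopPartition.le_pred ht'm (not_le.1 hrt')
    have hdisj : Disjoint (Set.Ioc (π.pred r) r) (Set.Ioc (ρ.pred s) s) :=
      Set.disjoint_left.2 fun x hx hx' =>
        absurd ((hx'.2.trans (ρ.mem_le s (StopPartition.mem_of_mem_erase hs))).trans ht'p)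
          (not_le.2 hx.1)
    rw [hterm s hs, S.meas_comp_of_disjoint measurableSet_Ioc measurableSet_Ioc hdisj,
      ContinuousLinearMap.zero_apply, inner_zero_right]

/-- Diagonal case of the master formula. -/
lemma inner_sum_self {t : ℝ≥0∞} (π : StopPartition t) (f g : H') :
    ⟪S.sum (fun u => E.eV (E.cut u f)) π, S.sum (fun u => E.eV (E.cut u g)) π⟫ =
      ∑ r ∈ π.pts.erase 0,
        (muF E S f g r - muF E S f g (π.pred r)) * Complex.exp (nuF E f g r) := by
  rw [inner_sum_sum E S π π (Finset.Subset.refl _) π.top_mem f g]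
  exact Finset.sum_congr rfl fun r hr => if_pos (StopPartition.le_top_of_mem_erase hr)

/-- Pairing with an exponential vector. -/
lemma inner_eV_sum {t : ℝ≥0∞} (π : StopPartition t) (f g : H') :
    ⟪E.eV f, S.sum (fun u => E.eV (E.cut u g)) π⟫ =
      ∑ r ∈ π.pts.erase 0,
        (muF E S f g r - muF E S f g (π.pred r)) * Complex.exp (nuF E f g r) := by
  unfold QST.sum
  rw [inner_sum]
  refine Finset.sum_congr rfl fun r hr => ?_
  have hr0 : 0 < r := StopPartition.pos_of_mem_erase hr
  have h1 : E.eV f = E.eV (E.cut ⊤ f) := by rw [E.cut_top]; rfl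
  rw [h1, inner_eV_meas_Ioc E S f g (StopPartition.pred_lt hr0).le le_top le_rfl,
    cut_inner_cut, min_eq_right (le_top : r ≤ ⊤)]

end Main

namespace StopPartition

variable {t : ℝ≥0∞}

/-- Restriction of a partition of `[0,t]` to `[0,t']`, for `t'` a partition point. -/
def restrict (π : StopPartition t) (t' : ℝ≥0∞) (h : t' ∈ π.pts) : StopPartition t' where
  pts := π.pts.filter (· ≤ t')
  zero_mem := Finset.mem_filter.2 ⟨π.zero_mem, zero_le⟩
  top_mem := Finset.mem_filter.2 ⟨h, le_rfl⟩
  mem_le := fun s hs => (Finset.mem_filter.1 hs).2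

lemma restrict_pred (π : StopPartition t) {t' : ℝ≥0∞} (h : t' ∈ π.pts) {s : ℝ≥0∞}
    (hs : s ≤ t') : (π.restrict t' h).pred s = π.pred s := by
  unfold pred restrict
  congr 1
  ext u
  simp only [Finset.mem_filter]
  exact ⟨fun h' => ⟨h'.1.1, h'.2⟩, fun h' => ⟨⟨h'.1, h'.2.le.trans hs⟩, h'.2⟩⟩

lemma restrict_erase (π : StopPartition t) {t' : ℝ≥0∞} (h : t' ∈ π.pts) :
    (π.restrict t' h).pts.erase 0 = (π.pts.erase 0).filter (· ≤ t') := by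
  ext u
  simp only [restrict, Finset.mem_erase, Finset.mem_filter]
  tauto

/-- Insertion of a point into a partition. -/
def insertPt (π : StopPartition t) (s : ℝ≥0∞) (hs : s ≤ t) : StopPartition t where
  pts := insert s π.pts
  zero_mem := Finset.mem_insert_of_mem π.zero_mem
  top_mem := Finset.mem_insert_of_mem π.top_mem
  mem_le := fun u hu => by
    rcases Finset.mem_insert.1 hu with rfl | hu
    · exact hs
    · exact π.mem_le u hu

lemma le_insertPt (π : StopPartition t) (s : ℝ≥0∞) (hs : s ≤ t) : π ≤ π.insertPt s hs :=
  Finset.subset_insert _ _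

lemma mem_insertPt (π : StopPartition t) (s : ℝ≥0∞) (hs : s ≤ t) :
    s ∈ (π.insertPt s hs).pts := Finset.mem_insert_self _ _

lemma tendsto_insertPt (s : ℝ≥0∞) (hs : s ≤ t) :
    Filter.Tendsto (fun π : StopPartition t => π.insertPt s hs) Filter.atTop Filter.atTop :=
  Filter.tendsto_atTop_atTop.2 fun b =>
    ⟨b, fun a ha => Finset.Subset.trans ha (Finset.subset_insert _ _)⟩

/-- Extension of a partition of `[0,s]` to `[0,t]` by adding the point `t`. -/
def extend (ρ : StopPartition s) (hst : s ≤ t) : StopPartition t where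
  pts := insert t ρ.pts
  zero_mem := Finset.mem_insert_of_mem ρ.zero_mem
  top_mem := Finset.mem_insert_self _ _
  mem_le := fun u hu => by
    rcases Finset.mem_insert.1 hu with rfl | hu
    · exact le_rfl
    · exact (ρ.mem_le u hu).trans hst

lemma tendsto_restrict_insertPt (s : ℝ≥0∞) (hs : s ≤ t) :
    Filter.Tendsto (fun π : StopPartition t => (π.insertPt s hs).restrict s (π.mem_insertPt s hs))
      Filter.atTop Filter.atTop := by
  refine Filter.tendsto_atTop_atTop.2 fun b => ⟨b.extend hs, fun a ha => ?_⟩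
  intro x hx
  refine Finset.mem_filter.2 ⟨Finset.mem_insert_of_mem (ha ?_), b.mem_le x hx⟩
  exact Finset.mem_insert_of_mem hx

end StopPartition

section Limits

variable {H' 𝓕' : Type*}
  [NormedAddCommGroup H'] [InnerProductSpace ℂ H'] [CompleteSpace H']
  [NormedAddCommGroup 𝓕'] [InnerProductSpace ℂ 𝓕'] [CompleteSpace 𝓕']
  (E : FockSpec H' 𝓕') (S : QST E)

lemma sum_restrict {t : ℝ≥0∞} (π : StopPartition t) {s : ℝ≥0∞} (h : s ∈ π.pts)
    (v : ℝ≥0∞ → 𝓕') :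
    S.sum v (π.restrict s h) = ∑ r ∈ π.pts.erase 0,
      (if r ≤ s then S.meas (Set.Ioc (π.pred r) r) (v r) else 0) := by
  unfold QST.sum
  rw [StopPartition.restrict_erase π h, Finset.sum_filter]
  refine Finset.sum_congr rfl fun r _ => ?_
  by_cases hrs : r ≤ s
  · rw [if_pos hrs, if_pos hrs, StopPartition.restrict_pred π h hrs]
  · rw [if_neg hrs, if_neg hrs]

lemma meas_Iic_sum {t : ℝ≥0∞} (π : StopPartition t) {s : ℝ≥0∞} (h : s ∈ π.pts)
    (v : ℝ≥0∞ → 𝓕') :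
    S.meas (Set.Iic s) (S.sum v π) = S.sum v (π.restrict s h) := by
  rw [sum_restrict E S π h v]
  unfold QST.sum
  rw [map_sum]
  refine Finset.sum_congr rfl fun r hr => ?_
  by_cases hrs : r ≤ s
  · rw [if_pos hrs]
    have hsub : Set.Ioc (π.pred r) r ⊆ Set.Iic s := fun x hx => hx.2.trans hrs
    have := (S.meas_comp_of_subset measurableSet_Ioc measurableSet_Iic hsub).2
    exact congrArg (fun T => T (v r)) this
  · rw [if_neg hrs]
    have hsp : s ≤ π.pred r := StopPartition.le_pred h (not_le.1 hrs)
    have hdisj : Disjoint (Set.Iic s) (Set.Ioc (π.pred r) r) :=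
      Set.disjoint_left.2 fun x hx hx' => absurd (hx.trans hsp) (not_le.2 hx'.1)
    have := S.meas_comp_of_disjoint measurableSet_Iic measurableSet_Ioc hdisj
    have h0 := congrArg (fun T => T (v r)) this
    simpa using h0

/-- The Riemann sum vector for the integrand `s ↦ ε(f|_{[0,s)})`. -/
def rsum (f : H') {t : ℝ≥0∞} (π : StopPartition t) : 𝓕' :=
  S.sum (fun u => E.eV (E.cut u f)) π

/-- Inner products of Riemann sums along refinement. -/
lemma inner_sum_refine {t : ℝ≥0∞} {π π' : StopPartition t} (hle : π ≤ π') (f g : H') :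
    ⟪rsum E S f π', rsum E S g π⟫ = ⟪rsum E S f π', rsum E S g π'⟫ := by
  unfold rsum
  rw [inner_sum_sum E S π' π hle π'.top_mem f g, inner_sum_self E S π' f g]
  exact Finset.sum_congr rfl fun r hr => if_pos (StopPartition.le_top_of_mem_erase hr)

lemma norm_sq_diff {t : ℝ≥0∞} {π π' : StopPartition t} (hle : π ≤ π') (f : H') :
    ‖rsum E S f π - rsum E S f π'‖ ^ 2 = ‖rsum E S f π‖ ^ 2 - ‖rsum E S f π'‖ ^ 2 := by
  set x := rsum E S f π with hx
  set y := rsum E S f π' with hy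
  have hk : ⟪y, x⟫ = ⟪y, y⟫ := inner_sum_refine E S hle f f
  have hk2 : ⟪x, y⟫ = ⟪y, y⟫ := by
    calc ⟪x, y⟫ = (starRingEnd ℂ) ⟪y, x⟫ := (inner_conj_symm _ _).symm
      _ = (starRingEnd ℂ) ⟪y, y⟫ := by rw [hk]
      _ = ⟪y, y⟫ := inner_conj_symm _ _
  have hC : ⟪x - y, x - y⟫ = ⟪x, x⟫ - ⟪y, y⟫ := by
    rw [inner_sub_left, inner_sub_right, inner_sub_right, hk, hk2]
    ring
  rw [inner_self_eq_norm_sq_to_K, inner_self_eq_norm_sq_to_K,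
    inner_self_eq_norm_sq_to_K] at hC
  have h2 : ((‖x - y‖ ^ 2 : ℝ) : ℂ) = ((‖x‖ ^ 2 - ‖y‖ ^ 2 : ℝ) : ℂ) := by
    push_cast
    exact hC
  exact_mod_cast h2

/-- Existence of the stop-time integral of `ε(f·1_{[0,·)})`. -/
lemma exists_lim (f : H') (t : ℝ≥0∞) :
    ∃ x : 𝓕', Filter.Tendsto (fun π : StopPartition t => rsum E S f π)
      Filter.atTop (𝓝 x) := by
  have hanti : Antitone (fun π : StopPartition t => ‖rsum E S f π‖ ^ 2) := by
    intro π π' hle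
    have h := norm_sq_diff E S hle f
    have h2 := sq_nonneg ‖rsum E S f π - rsum E S f π'‖
    simp only
    linarith
  have hbdd : BddBelow (Set.range fun π : StopPartition t => ‖rsum E S f π‖ ^ 2) := by
    refine ⟨0, fun x hx => ?_⟩
    obtain ⟨π, rfl⟩ := hx
    positivity
  have hlim := tendsto_atTop_ciInf hanti hbdd
  have hLle : ∀ σ : StopPartition t, (⨅ π : StopPartition t, ‖rsum E S f π‖ ^ 2) ≤ ‖rsum E S f σ‖ ^ 2 :=
    fun σ => ciInf_le hbdd σ
  have hcauchy : CauchySeq (fun π : StopPartition t => rsum E S f π) := by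
    rw [Metric.cauchySeq_iff]
    intro ε hε
    have hev : ∀ᶠ π in Filter.atTop, ‖rsum E S f π‖ ^ 2
        < (⨅ σ : StopPartition t, ‖rsum E S f σ‖ ^ 2) + ε ^ 2 / 4 :=
      hlim.eventually (gt_mem_nhds (lt_add_of_pos_right _ (by positivity)))
    obtain ⟨π₀, hπ₀⟩ := Filter.eventually_atTop.1 hev
    refine ⟨π₀, fun m hm n hn => ?_⟩
    have hd : ∀ m' : StopPartition t, π₀ ≤ m' → ∀ k : StopPartition t, m' ≤ k →
        dist (rsum E S f m') (rsum E S f k) < ε / 2 := by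
      intro m' hm' k hk
      have h := norm_sq_diff E S hk f
      have h1 := hπ₀ m' hm'
      have h2 := hLle k
      rw [dist_eq_norm]
      have h3 : ‖rsum E S f m' - rsum E S f k‖ ^ 2 < (ε / 2) ^ 2 := by
        rw [h]
        have : (ε / 2) ^ 2 = ε ^ 2 / 4 := by ring
        rw [this]
        linarith
      exact lt_of_pow_lt_pow_left₀ 2 (by positivity) h3
    calc dist (rsum E S f m) (rsum E S f n)
        ≤ dist (rsum E S f m) (rsum E S f (m ⊔ n)) +
          dist (rsum E S f n) (rsum E S f (m ⊔ n)) := dist_triangle_right _ _ _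
      _ < ε / 2 + ε / 2 := add_lt_add (hd m hm _ le_sup_left) (hd n hn _ le_sup_right)
      _ = ε := by ring
  exact cauchySeq_tendsto_of_complete hcauchy

end Limits

section Limits2

variable {H' 𝓕' : Type*}
  [NormedAddCommGroup H'] [InnerProductSpace ℂ H'] [CompleteSpace H']
  [NormedAddCommGroup 𝓕'] [InnerProductSpace ℂ 𝓕'] [CompleteSpace 𝓕']
  (E : FockSpec H' 𝓕') (S : QST E)

/-- The limit of the Riemann sums: `E_{S,t} ε(f)`. -/
def limVec (f : H') (t : ℝ≥0∞) : 𝓕' := Classical.choose (exists_lim E S f t)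

lemma limVec_spec (f : H') (t : ℝ≥0∞) :
    Filter.Tendsto (fun π : StopPartition t => rsum E S f π) Filter.atTop
      (𝓝 (limVec E S f t)) :=
  Classical.choose_spec (exists_lim E S f t)

lemma inner_eV_limVec (f g : H') (t : ℝ≥0∞) :
    ⟪E.eV g, limVec E S f t⟫ = ⟪limVec E S g t, limVec E S f t⟫ := by
  have hper : ∀ π : StopPartition t,
      ⟪E.eV g, rsum E S f π⟫ = ⟪rsum E S g π, rsum E S f π⟫ := fun π => by
    unfold rsum
    rw [inner_eV_sum E S π g f, inner_sum_self E S π g f]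
  have h1 : Filter.Tendsto (fun π : StopPartition t => ⟪E.eV g, rsum E S f π⟫)
      Filter.atTop (𝓝 ⟪E.eV g, limVec E S f t⟫) :=
    tendsto_const_nhds.inner (limVec_spec E S f t)
  have h2 : Filter.Tendsto (fun π : StopPartition t => ⟪rsum E S g π, rsum E S f π⟫)
      Filter.atTop (𝓝 ⟪limVec E S g t, limVec E S f t⟫) :=
    (limVec_spec E S g t).inner (limVec_spec E S f t)
  rw [show (fun π : StopPartition t => ⟪E.eV g, rsum E S f π⟫)
    = fun π : StopPartition t => ⟪rsum E S g π, rsum E S f π⟫ from funext hper] at h1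
  exact tendsto_nhds_unique h1 h2

lemma sum_restrict_scalar {t : ℝ≥0∞} (π : StopPartition t) {s : ℝ≥0∞} (h : s ∈ π.pts)
    (F : ℝ≥0∞ → ℝ≥0∞ → ℂ) :
    ∑ r ∈ (π.restrict s h).pts.erase 0, F ((π.restrict s h).pred r) r
      = ∑ r ∈ π.pts.erase 0, (if r ≤ s then F (π.pred r) r else 0) := by
  rw [StopPartition.restrict_erase π h, Finset.sum_filter]
  refine Finset.sum_congr rfl fun r _ => ?_
  by_cases hrs : r ≤ s
  · rw [if_pos hrs, if_pos hrs, StopPartition.restrict_pred π h hrs]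
  · rw [if_neg hrs, if_neg hrs]

lemma inner_limVec_limVec {s t : ℝ≥0∞} (hst : s ≤ t) (f g : H') :
    ⟪limVec E S g t, limVec E S f s⟫ = ⟪limVec E S g s, limVec E S f s⟫ := by
  have hper : ∀ π : StopPartition t,
      ⟪rsum E S g (π.insertPt s hst),
        rsum E S f ((π.insertPt s hst).restrict s (π.mem_insertPt s hst))⟫
      = ⟪rsum E S g ((π.insertPt s hst).restrict s (π.mem_insertPt s hst)),
          rsum E S f ((π.insertPt s hst).restrict s (π.mem_insertPt s hst))⟫ := fun π => by
    unfold rsum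
    rw [inner_sum_sum E S (π.insertPt s hst)
        ((π.insertPt s hst).restrict s (π.mem_insertPt s hst))
        (Finset.filter_subset _ _) (π.mem_insertPt s hst) g f,
      inner_sum_self E S ((π.insertPt s hst).restrict s (π.mem_insertPt s hst)) g f,
      sum_restrict_scalar (π.insertPt s hst) (π.mem_insertPt s hst)
        (fun a r => (muF E S g f r - muF E S g f a) * Complex.exp (nuF E g f r))]
  have h1 : Filter.Tendsto
      (fun π : StopPartition t => ⟪rsum E S g (π.insertPt s hst),
        rsum E S f ((π.insertPt s hst).restrict s (π.mem_insertPt s hst))⟫)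
      Filter.atTop (𝓝 ⟪limVec E S g t, limVec E S f s⟫) :=
    ((limVec_spec E S g t).comp (StopPartition.tendsto_insertPt s hst)).inner
      ((limVec_spec E S f s).comp (StopPartition.tendsto_restrict_insertPt s hst))
  have h2 : Filter.Tendsto
      (fun π : StopPartition t =>
        ⟪rsum E S g ((π.insertPt s hst).restrict s (π.mem_insertPt s hst)),
          rsum E S f ((π.insertPt s hst).restrict s (π.mem_insertPt s hst))⟫)
      Filter.atTop (𝓝 ⟪limVec E S g s, limVec E S f s⟫) :=
    ((limVec_spec E S g s).comp (StopPartition.tendsto_restrict_insertPt s hst)).inner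
      ((limVec_spec E S f s).comp (StopPartition.tendsto_restrict_insertPt s hst))
  rw [show (fun π : StopPartition t => ⟪rsum E S g (π.insertPt s hst),
        rsum E S f ((π.insertPt s hst).restrict s (π.mem_insertPt s hst))⟫)
      = fun π : StopPartition t =>
        ⟪rsum E S g ((π.insertPt s hst).restrict s (π.mem_insertPt s hst)),
          rsum E S f ((π.insertPt s hst).restrict s (π.mem_insertPt s hst))⟫
    from funext hper] at h1
  exact tendsto_nhds_unique h1 h2

lemma meas_Iic_limVec {s t : ℝ≥0∞} (hst : s ≤ t) (f : H') :
    S.meas (Set.Iic s) (limVec E S f t) = limVec E S f s := by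
  have hper : ∀ π : StopPartition t,
      S.meas (Set.Iic s) (rsum E S f (π.insertPt s hst))
        = rsum E S f ((π.insertPt s hst).restrict s (π.mem_insertPt s hst)) := fun π => by
    unfold rsum
    exact meas_Iic_sum E S (π.insertPt s hst) (π.mem_insertPt s hst) _
  have h1 : Filter.Tendsto
      (fun π : StopPartition t => S.meas (Set.Iic s) (rsum E S f (π.insertPt s hst)))
      Filter.atTop (𝓝 (S.meas (Set.Iic s) (limVec E S f t))) :=
    ((S.meas (Set.Iic s)).continuous.tendsto _).comp
      ((limVec_spec E S f t).comp (StopPartition.tendsto_insertPt s hst))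
  have h2 : Filter.Tendsto
      (fun π : StopPartition t =>
        rsum E S f ((π.insertPt s hst).restrict s (π.mem_insertPt s hst)))
      Filter.atTop (𝓝 (limVec E S f s)) :=
    (limVec_spec E S f s).comp (StopPartition.tendsto_restrict_insertPt s hst)
  rw [show (fun π : StopPartition t => S.meas (Set.Iic s) (rsum E S f (π.insertPt s hst)))
      = fun π : StopPartition t =>
        rsum E S f ((π.insertPt s hst).restrict s (π.mem_insertPt s hst))
    from funext hper] at h1
  exact tendsto_nhds_unique h1 h2

end Limits2

section Proj

variable {H' 𝓕' : Type*}
  [NormedAddCommGroup H'] [InnerProductSpace ℂ H'] [CompleteSpace H']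
  [NormedAddCommGroup 𝓕'] [InnerProductSpace ℂ 𝓕'] [CompleteSpace 𝓕']
  (E : FockSpec H' 𝓕') (S : QST E)

/-- Generators of the range of `E_{S,t}`. -/
def genSet (t : ℝ≥0∞) : Set 𝓕' :=
  {z | ∃ r : ℝ≥0∞, ∃ f : H', 0 < r ∧ r ≤ t ∧ z = limVec E S f r}

/-- The range of `E_{S,t}`. -/
def KK (t : ℝ≥0∞) : Submodule ℂ 𝓕' :=
  (Submodule.span ℂ (genSet E S t)).topologicalClosure

instance (t : ℝ≥0∞) : CompleteSpace (KK E S t) :=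
  (Submodule.isClosed_topologicalClosure _).completeSpace_coe

/-- The time projection `E_{S,t}`. -/
def EStOp (t : ℝ≥0∞) : 𝓕' →L[ℂ] 𝓕' :=
  (KK E S t).subtypeL ∘L Submodule.orthogonalProjectionOnto (KK E S t)

lemma EStOp_sa (t : ℝ≥0∞) : IsSelfAdjoint (EStOp E S t) :=
  isSelfAdjoint_starProjection _

lemma EStOp_idem (t : ℝ≥0∞) : EStOp E S t ∘L EStOp E S t = EStOp E S t := by
  ext x
  simp only [EStOp, ContinuousLinearMap.comp_apply, Submodule.subtypeL_apply,
    Submodule.orthogonalProjectionOnto_mem_subspace_eq_self]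

lemma limVec_mem_KK {r t : ℝ≥0∞} (hr : 0 < r) (hrt : r ≤ t) (f : H') :
    limVec E S f r ∈ KK E S t :=
  Submodule.le_topologicalClosure _ (Submodule.subset_span ⟨r, f, hr, hrt, rfl⟩)

lemma inner_sub_limVec_eq_zero {t : ℝ≥0∞} (f : H') {w : 𝓕'} (hw : w ∈ KK E S t) :
    ⟪E.eV f - limVec E S f t, w⟫ = 0 := by
  set z := E.eV f - limVec E S f t with hz
  have hgen : genSet E S t ⊆ {w : 𝓕' | ⟪z, w⟫ = 0} := by
    rintro w ⟨r, g, hr, hrt, rfl⟩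
    have h1 : ⟪E.eV f, limVec E S g r⟫ = ⟪limVec E S f r, limVec E S g r⟫ :=
      inner_eV_limVec E S g f r
    have h2 : ⟪limVec E S f t, limVec E S g r⟫ = ⟪limVec E S f r, limVec E S g r⟫ :=
      inner_limVec_limVec E S hrt g f
    simp only [hz, Set.mem_setOf_eq, inner_sub_left, h1, h2, sub_self]
  have hspan : (Submodule.span ℂ (genSet E S t) : Set 𝓕') ⊆ {w : 𝓕' | ⟪z, w⟫ = 0} := by
    intro w hwsp
    have hle : Submodule.span ℂ (genSet E S t) ≤ LinearMap.ker (innerSL ℂ z : 𝓕' →ₗ[ℂ] ℂ) :=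
      Submodule.span_le.2 fun v hv => LinearMap.mem_ker.2 (hgen hv)
    exact hle hwsp
  have hclosed : IsClosed {w : 𝓕' | ⟪z, w⟫ = 0} :=
    isClosed_eq (innerSL ℂ z).continuous continuous_const
  have hKcoe : (KK E S t : Set 𝓕') = closure (Submodule.span ℂ (genSet E S t) : Set 𝓕') :=
    Submodule.topologicalClosure_coe _
  have hw' : w ∈ closure (Submodule.span ℂ (genSet E S t) : Set 𝓕') := by
    rw [← hKcoe]; exact hw
  exact closure_minimal hspan hclosed hw'

lemma EStOp_eV {t : ℝ≥0∞} (ht : 0 < t) (f : H') :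
    EStOp E S t (E.eV f) = limVec E S f t := by
  have h := Submodule.eq_starProjection_of_mem_of_inner_eq_zero
    (K := KK E S t) (u := E.eV f) (limVec_mem_KK E S ht le_rfl f)
    (fun w hw => inner_sub_limVec_eq_zero E S f hw)
  exact h

lemma KK_mono {s t : ℝ≥0∞} (hst : s ≤ t) : KK E S s ≤ KK E S t :=
  Submodule.topologicalClosure_mono (Submodule.span_mono
    fun z ⟨r, g, hr, hrs, hzeq⟩ => ⟨r, g, hr, hrs.trans hst, hzeq⟩)

lemma EStOp_comp {s t : ℝ≥0∞} (hst : s ≤ t) :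
    EStOp E S s ∘L EStOp E S t = EStOp E S s ∧
      EStOp E S t ∘L EStOp E S s = EStOp E S s := by
  constructor
  · ext x
    simp only [EStOp, ContinuousLinearMap.comp_apply, Submodule.subtypeL_apply]
    have hmem : x - (Submodule.orthogonalProjectionOnto (KK E S t) x : 𝓕') ∈ (KK E S s)ᗮ :=
      Submodule.orthogonal_le (KK_mono E S hst)
        (Submodule.sub_starProjection_mem_orthogonal (K := KK E S t) x)
    have h0 : Submodule.orthogonalProjectionOnto (KK E S s)
        (x - (Submodule.orthogonalProjectionOnto (KK E S t) x : 𝓕')) = 0 :=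
      Submodule.orthogonalProjectionOnto_apply_of_mem_orthogonal hmem
    rw [map_sub] at h0
    exact congrArg _ (sub_eq_zero.1 h0).symm
  · ext x
    simp only [EStOp, ContinuousLinearMap.comp_apply, Submodule.subtypeL_apply]
    have hmem : (Submodule.orthogonalProjectionOnto (KK E S s) x : 𝓕') ∈ KK E S t :=
      KK_mono E S hst (Submodule.orthogonalProjectionOnto (KK E S s) x).2
    exact Submodule.starProjection_eq_self_iff.2 hmem

end Proj


/-- Theorem `expS`: the time projections `E_{S,t}`, `t ∈ (0, ∞]`,
with `E_{S,t} ε(f) = ∫_{[0,t]} S(ds) ε(f|_{[0,s)}) ⊗ ε(0|_{[s,∞)})`, satisfying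
`E_{S,s} E_{S,t} = E_{S,s∧t} = E_{S,t} E_{S,s}` and `S([0,s]) E_{S,∞} = E_{S,s}`. -/
theorem time_projections_exist
    (E : FockSpec H 𝓕) (S : QST E) (hS : S.Finite) :
    ∃ ESt : ℝ≥0∞ → 𝓕 →L[ℂ] 𝓕,
      (∀ t : ℝ≥0∞, 0 < t →
        IsSelfAdjoint (ESt t) ∧ ESt t ∘L ESt t = ESt t ∧
          ∀ f : H,
            Tendsto (fun π : StopPartition t => S.sum (fun s => E.past f s (E.eV 0)) π) atTop
              (𝓝 (ESt t (E.eV f)))) ∧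
      (∀ s t : ℝ≥0∞, 0 < s → 0 < t →
        ESt s ∘L ESt t = ESt (min s t) ∧ ESt t ∘L ESt s = ESt (min s t)) ∧
      (∀ s : ℝ≥0∞, 0 < s → S.meas {u | u ≤ s} ∘L ESt ⊤ = ESt s) := by
  refine ⟨EStOp E S, ?_, ?_, ?_⟩
  · intro t ht
    refine ⟨EStOp_sa E S t, EStOp_idem E S t, fun f => ?_⟩
    have hv : (fun s => E.past f s (E.eV 0)) = fun s => E.eV (E.cut s f) := by
      funext s
      rw [E.past_eV]
      congr 1
      simp [map_zero]
    have hfun : (fun π : StopPartition t => S.sum (fun s => E.past f s (E.eV 0)) π)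
        = fun π : StopPartition t => rsum E S f π := by
      funext π
      rw [hv]
      rfl
    rw [EStOp_eV E S ht f, hfun]
    exact limVec_spec E S f t
  · intro s t hs ht
    rcases le_total s t with hle | hle
    · rw [min_eq_left hle]
      exact ⟨(EStOp_comp E S hle).1, (EStOp_comp E S hle).2⟩
    · rw [min_eq_right hle]
      exact ⟨(EStOp_comp E S hle).2, (EStOp_comp E S hle).1⟩
  · intro s hs
    apply ContinuousLinearMap.ext_on E.dense_eV
    rintro x ⟨f, rfl⟩
    simp only [ContinuousLinearMap.comp_apply]
    rw [EStOp_eV E S hs f, EStOp_eV E S (by norm_num : (0 : ℝ≥0∞) < ⊤) f]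
    exact meas_Iic_limVec E S le_top f

end
end

section
/- Let S be a finite quantum stop time, let V be an isometric p-adapted cocycle, and let t ∈ (0,∞). For any finite partition π = {0 = π_0 < ⋯ < π_{n+1} = t} of [0,t], the Riemann sum V_{S,π} := Σ_{j=1}^{n+1} V_{π_j} S((π_{j−1}, π_j]) satisfies ‖V_{S,π} z‖ ≤ ‖S([0,t]) z‖ for all z ∈ h ⊗ F. -/
/- ------------------------------------------------------------------
Common framework: an abstract axiomatisation of Boson Fock space
`𝓕 = Γ(L²([0,∞); k))` over `H = L²([0,∞); k)`, quantum stop times,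
stop-time integrals (as limits of Riemann sums over the net of finite
partitions of `[0, t] ⊆ [0, ∞]` ordered by refinement), the CCR flow,
and operator cocycles, following Belton–Sinha,
"Stopping the CCR flow and its isometric cocycles".
------------------------------------------------------------------ -/

open Filter MeasureTheory Topology
open scoped ENNReal

noncomputable section

local notation "⟪" x ", " y "⟫" => @inner ℂ _ _ x y

variable {H 𝓕 : Type*}
  [NormedAddCommGroup H] [InnerProductSpace ℂ H] [CompleteSpace H]
  [NormedAddCommGroup 𝓕] [InnerProductSpace ℂ 𝓕] [CompleteSpace 𝓕]

variable {E : FockSpec H 𝓕}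

variable {h 𝓚 : Type*}
  [NormedAddCommGroup h] [InnerProductSpace ℂ h] [CompleteSpace h]
  [NormedAddCommGroup 𝓚] [InnerProductSpace ℂ 𝓚] [CompleteSpace 𝓚]

/- ------------------ auxiliary general lemmas ------------------ -/


lemma clm_ext_dense_span {E₁ E₂ : Type*} [NormedAddCommGroup E₁] [NormedSpace ℂ E₁]
    [NormedAddCommGroup E₂] [NormedSpace ℂ E₂] {X Y : E₁ →L[ℂ] E₂} {s : Set E₁}
    (hd : Dense ((Submodule.span ℂ s : Submodule ℂ E₁) : Set E₁))
    (hXY : ∀ z ∈ s, X z = Y z) : X = Y := by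
  have h1 : Set.EqOn X Y ((Submodule.span ℂ s : Submodule ℂ E₁) : Set E₁) := by
    intro z hz
    induction hz using Submodule.span_induction with
    | mem z hz => exact hXY z hz
    | zero => simp
    | add x y _ _ hx hy => simp only [map_add, hx, hy]
    | smul c x _ hx => simp only [_root_.map_smul, hx]
  exact ContinuousLinearMap.coeFn_injective (Continuous.ext_on hd X.continuous Y.continuous h1)

lemma inner_ext_dense_span {E₁ : Type*} [NormedAddCommGroup E₁] [InnerProductSpace ℂ E₁]
    {x y : E₁} {s : Set E₁}
    (hd : Dense ((Submodule.span ℂ s : Submodule ℂ E₁) : Set E₁))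
    (hxy : ∀ z ∈ s, ⟪z, x⟫ = ⟪z, y⟫) : x = y := by
  apply ext_inner_left ℂ
  intro v
  have h1 : Set.EqOn (fun z => ⟪z, x⟫) (fun z => ⟪z, y⟫)
      ((Submodule.span ℂ s : Submodule ℂ E₁) : Set E₁) := by
    intro z hz
    induction hz using Submodule.span_induction with
    | mem z hz => exact hxy z hz
    | zero => simp
    | add a b _ _ ha hb => simp only [inner_add_left]; simp only at ha hb; rw [ha, hb]
    | smul c a _ ha => simp only [inner_smul_left]; simp only at ha; rw [ha]
  have h2 := Continuous.ext_on hd (continuous_id.inner continuous_const)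
    (continuous_id.inner continuous_const) h1
  exact congrFun h2 v

lemma sa_idem_contraction {𝓚 : Type*} [NormedAddCommGroup 𝓚] [InnerProductSpace ℂ 𝓚]
    [CompleteSpace 𝓚] {T : 𝓚 →L[ℂ] 𝓚}
    (hsa : ContinuousLinearMap.adjoint T = T) (hid : T ∘L T = T) (z : 𝓚) :
    ‖T z‖ ≤ ‖z‖ := by
  have hTT : T (T z) = T z := by
    have := congrArg (fun (X : 𝓚 →L[ℂ] 𝓚) => X z) hid; simpa using this
  have h2 := ContinuousLinearMap.adjoint_inner_left T (T z) z
  rw [hsa] at h2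
  have h1 : ⟪T z, T z⟫ = ⟪z, T z⟫ := by rw [h2, hTT]
  have h3 : ‖T z‖ ^ 2 ≤ ‖z‖ * ‖T z‖ := by
    rw [norm_sq_eq_re_inner (𝕜 := ℂ) (T z), h1]
    calc RCLike.re ⟪z, T z⟫ ≤ ‖⟪z, T z⟫‖ := RCLike.re_le_norm _
    _ ≤ ‖z‖ * ‖T z‖ := norm_inner_le_norm _ _
  rcases eq_or_lt_of_le (norm_nonneg (T z)) with h4 | h4
  · rw [← h4]; exact norm_nonneg z
  · have h5 : ‖T z‖ * ‖T z‖ ≤ ‖z‖ * ‖T z‖ := by nlinarith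
    exact le_of_mul_le_mul_right h5 h4

lemma adj_comp_self_eq_zero {𝓚 : Type*} [NormedAddCommGroup 𝓚] [InnerProductSpace ℂ 𝓚]
    [CompleteSpace 𝓚] {T : 𝓚 →L[ℂ] 𝓚}
    (h : ContinuousLinearMap.adjoint T ∘L T = 0) : T = 0 := by
  ext x
  rw [ContinuousLinearMap.zero_apply]
  have h4 : ContinuousLinearMap.adjoint T (T x) = 0 := by
    have := congrArg (fun (X : 𝓚 →L[ℂ] 𝓚) => X x) h; simpa using this
  have h2 : ⟪T x, T x⟫ = 0 := by
    rw [← ContinuousLinearMap.adjoint_inner_right T x (T x), h4, inner_zero_right]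
  exact inner_self_eq_zero.mp h2

lemma proj_orth_mul {𝓚 : Type*} [NormedAddCommGroup 𝓚] [InnerProductSpace ℂ 𝓚]
    [CompleteSpace 𝓚] {P Q : 𝓚 →L[ℂ] 𝓚}
    (hPsa : IsSelfAdjoint P) (hQsa : IsSelfAdjoint Q)
    (hP : P * P = P) (hQ : Q * Q = Q) (hPQ : (P + Q) * (P + Q) = P + Q) :
    P * Q = 0 := by
  have e : P*P + (P*Q + Q*P) + Q*Q = (P+Q)*(P+Q) := by noncomm_ring
  rw [hPQ, hP, hQ] at e
  have h1 : P*Q + Q*P = 0 := by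
    calc P*Q + Q*P = (P + (P*Q + Q*P) + Q) - (P+Q) := by abel
    _ = (P+Q) - (P+Q) := by rw [e]
    _ = 0 := sub_self _
  have hb : Q*P = -(P*Q) := eq_neg_of_add_eq_zero_right h1
  have ha2 : (P*Q)*(P*Q) = -(P*Q) := by
    calc (P*Q)*(P*Q) = P*((Q*P)*Q) := by noncomm_ring
    _ = P*((-(P*Q))*Q) := by rw [hb]
    _ = -((P*P)*(Q*Q)) := by noncomm_ring
    _ = -(P*Q) := by rw [hP, hQ]
  have hstar : star (P*Q) = -(P*Q) := by
    rw [star_mul, hPsa.star_eq, hQsa.star_eq, hb]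
  have haa : star (P*Q) * (P*Q) = P*Q := by
    rw [hstar]
    calc (-(P*Q))*(P*Q) = -((P*Q)*(P*Q)) := by noncomm_ring
    _ = -(-(P*Q)) := by rw [ha2]
    _ = P*Q := neg_neg _
  have hsa' : star (P*Q) = P*Q := by
    rw [← haa, star_mul, star_star]
  have heq : P*Q = -(P*Q) := hsa'.symm.trans hstar
  have h3 : (2:ℂ) • (P*Q) = 0 := by
    rw [two_smul]
    nth_rewrite 2 [heq]
    abel
  exact (smul_eq_zero.mp h3).resolve_left (by norm_num)


/- ------------------ framework lemmas ------------------ -/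

section FrameworkLemmas

lemma aux_tens_norm (A : AmpSpec 𝓕 h 𝓚) (u : h) (x : 𝓕) :
    ‖A.tens u x‖ = ‖u‖ * ‖x‖ := by
  have h2 : ‖A.tens u x‖ ^ 2 = (‖u‖ * ‖x‖) ^ 2 := by
    rw [norm_sq_eq_re_inner (𝕜 := ℂ), A.inner_tens, inner_self_eq_norm_sq_to_K,
      inner_self_eq_norm_sq_to_K, ← RCLike.ofReal_pow, ← RCLike.ofReal_pow,
      ← RCLike.ofReal_mul, RCLike.ofReal_re]
    ring
  calc ‖A.tens u x‖ = Real.sqrt (‖A.tens u x‖ ^ 2) := (Real.sqrt_sq (norm_nonneg _)).symm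
  _ = Real.sqrt ((‖u‖ * ‖x‖) ^ 2) := by rw [h2]
  _ = ‖u‖ * ‖x‖ := Real.sqrt_sq (mul_nonneg (norm_nonneg _) (norm_nonneg _))

lemma aux_dense_tensEV (E : FockSpec H 𝓕) (A : AmpSpec 𝓕 h 𝓚) :
    Dense ((Submodule.span ℂ {z : 𝓚 | ∃ u f, z = A.tens u (E.eV f)} : Submodule ℂ 𝓚) : Set 𝓚) := by
  set D := (Submodule.span ℂ {z : 𝓚 | ∃ u f, z = A.tens u (E.eV f)} : Submodule ℂ 𝓚)
  have key : ∀ (u : h) (x : 𝓕), A.tens u x ∈ closure (D : Set 𝓚) := by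
    intro u
    have hb : ∀ x : 𝓕, ‖A.tens u x‖ ≤ ‖u‖ * ‖x‖ := fun x => le_of_eq (aux_tens_norm A u x)
    set Tu : 𝓕 →L[ℂ] 𝓚 := LinearMap.mkContinuous (A.tens u) ‖u‖ hb
    have hTu : ∀ x, Tu x = A.tens u x := fun x => rfl
    have hcl : IsClosed {x : 𝓕 | Tu x ∈ closure (D : Set 𝓚)} :=
      IsClosed.preimage Tu.continuous isClosed_closure
    have hsp : ((Submodule.span ℂ (Set.range E.eV) : Submodule ℂ 𝓕) : Set 𝓕) ⊆
        {x : 𝓕 | Tu x ∈ closure (D : Set 𝓚)} := by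
      intro x hx
      have hmem : A.tens u x ∈ D := by
        induction hx using Submodule.span_induction with
        | mem z hz => obtain ⟨f, rfl⟩ := hz; exact Submodule.subset_span ⟨u, f, rfl⟩
        | zero => rw [map_zero]; exact D.zero_mem
        | add a b _ _ ha hb => rw [map_add]; exact D.add_mem ha hb
        | smul c a _ ha => rw [_root_.map_smul]; exact D.smul_mem c ha
      show Tu x ∈ closure (D : Set 𝓚)
      rw [hTu]
      exact subset_closure hmem
    intro x
    have hx : x ∈ closure ((Submodule.span ℂ (Set.range E.eV) : Submodule ℂ 𝓕) : Set 𝓕) :=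
      E.dense_eV x
    have := closure_minimal hsp hcl hx
    rw [← hTu]; exact this
  have hspan_le : (Submodule.span ℂ {z : 𝓚 | ∃ u x, z = A.tens u x}) ≤ D.topologicalClosure := by
    rw [Submodule.span_le]
    rintro z ⟨u, x, rfl⟩
    show _ ∈ (D.topologicalClosure : Set 𝓚)
    rw [Submodule.topologicalClosure_coe]
    exact key u x
  have hd2 : Dense ((D.topologicalClosure : Submodule ℂ 𝓚) : Set 𝓚) :=
    A.dense_tens.mono (fun z hz => hspan_le hz)
  rw [Submodule.topologicalClosure_coe] at hd2
  exact dense_closure.mp hd2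

variable {E : FockSpec H 𝓕}

/- extension lemmas -/

lemma aux_tensEV_vec_ext (A : AmpSpec 𝓕 h 𝓚) {x y : 𝓚}
    (hx : ∀ (u : h) (f : H), ⟪A.tens u (E.eV f), x⟫ = ⟪A.tens u (E.eV f), y⟫) : x = y :=
  inner_ext_dense_span (aux_dense_tensEV E A) (by rintro z ⟨u, f, rfl⟩; exact hx u f)

lemma aux_tens_vec_ext (A : AmpSpec 𝓕 h 𝓚) {x y : 𝓚}
    (hx : ∀ (u : h) (b : 𝓕), ⟪A.tens u b, x⟫ = ⟪A.tens u b, y⟫) : x = y :=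
  inner_ext_dense_span A.dense_tens (by rintro z ⟨u, b, rfl⟩; exact hx u b)

lemma aux_tensEV_clm_ext (A : AmpSpec 𝓕 h 𝓚) {X Y : 𝓚 →L[ℂ] 𝓚}
    (hXY : ∀ (v : h) (g : H), X (A.tens v (E.eV g)) = Y (A.tens v (E.eV g))) : X = Y :=
  clm_ext_dense_span (aux_dense_tensEV E A) (by rintro z ⟨v, g, rfl⟩; exact hXY v g)

lemma aux_tens_clm_ext (A : AmpSpec 𝓕 h 𝓚) {X Y : 𝓚 →L[ℂ] 𝓚}
    (hXY : ∀ (v : h) (b : 𝓕), X (A.tens v b) = Y (A.tens v b)) : X = Y :=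
  clm_ext_dense_span A.dense_tens (by rintro z ⟨v, b, rfl⟩; exact hXY v b)

lemma aux_mat_ext (A : AmpSpec 𝓕 h 𝓚) {X Y : 𝓚 →L[ℂ] 𝓚}
    (hXY : ∀ (u : h) (f : H) (v : h) (g : H),
      ⟪A.tens u (E.eV f), X (A.tens v (E.eV g))⟫ = ⟪A.tens u (E.eV f), Y (A.tens v (E.eV g))⟫) :
    X = Y :=
  aux_tensEV_clm_ext A fun v g => aux_tensEV_vec_ext A fun u f => hXY u f v g

lemma aux_eV_vec_ext (E : FockSpec H 𝓕) {x y : 𝓕}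
    (hx : ∀ f : H, ⟪E.eV f, x⟫ = ⟪E.eV f, y⟫) : x = y :=
  inner_ext_dense_span E.dense_eV (by rintro z ⟨f, rfl⟩; exact hx f)

lemma aux_eV_clm_ext (E : FockSpec H 𝓕) {X Y : 𝓕 →L[ℂ] 𝓕}
    (hXY : ∀ g : H, X (E.eV g) = Y (E.eV g)) : X = Y :=
  clm_ext_dense_span E.dense_eV (by rintro z ⟨g, rfl⟩; exact hXY g)

/- amp lemmas -/

lemma aux_amp_adjoint (A : AmpSpec 𝓕 h 𝓚) (X : 𝓕 →L[ℂ] 𝓕) :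
    ContinuousLinearMap.adjoint (A.amp X) = A.amp (ContinuousLinearMap.adjoint X) := by
  apply aux_tens_clm_ext A
  intro v b
  apply aux_tens_vec_ext A
  intro u c
  rw [ContinuousLinearMap.adjoint_inner_right, A.amp_tens, A.amp_tens, A.inner_tens,
    A.inner_tens, ContinuousLinearMap.adjoint_inner_right]

lemma aux_amp_comp (A : AmpSpec 𝓕 h 𝓚) (X Y : 𝓕 →L[ℂ] 𝓕) :
    A.amp X ∘L A.amp Y = A.amp (X ∘L Y) := by
  apply aux_tens_clm_ext A
  intro v b
  rw [ContinuousLinearMap.comp_apply, A.amp_tens, A.amp_tens, A.amp_tens,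
    ContinuousLinearMap.comp_apply]

lemma aux_amp_zero (A : AmpSpec 𝓕 h 𝓚) : A.amp 0 = 0 := by
  apply aux_tens_clm_ext A
  intro v b
  rw [A.amp_tens]
  simp only [ContinuousLinearMap.zero_apply]
  exact (A.tens v).map_zero

lemma aux_amp_inner_left (A : AmpSpec 𝓕 h 𝓚) {R : 𝓕 →L[ℂ] 𝓕}
    (hR : ContinuousLinearMap.adjoint R = R) (x y : 𝓚) :
    ⟪A.amp R x, y⟫ = ⟪x, A.amp R y⟫ := by
  rw [← ContinuousLinearMap.adjoint_inner_left (A.amp R) y x, aux_amp_adjoint, hR]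

/- cut lemmas -/

lemma aux_cut_cut (r : ℝ≥0∞) (f : H) : E.cut r (E.cut r f) = E.cut r f := by
  rw [E.cut_min, min_self]

lemma aux_inner_cut_cut (r : ℝ≥0∞) (f g : H) :
    ⟪E.cut r f, E.cut r g⟫ = ⟪f, E.cut r g⟫ := by
  rw [E.cut_sa, aux_cut_cut]

lemma aux_inner_cut_future (r : ℝ≥0∞) (f g : H) :
    ⟪E.cut r f, g - E.cut r g⟫ = 0 := by
  rw [inner_sub_right, E.cut_sa, E.cut_sa, aux_cut_cut, sub_self]

lemma aux_inner_future_cut (r : ℝ≥0∞) (f g : H) :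
    ⟪f - E.cut r f, E.cut r g⟫ = 0 := by
  rw [inner_sub_left, aux_inner_cut_cut, sub_self]

lemma aux_cut_sub_cut (r : ℝ≥0∞) (f : H) : E.cut r (f - E.cut r f) = 0 := by
  rw [map_sub, aux_cut_cut, sub_self]

lemma aux_cut_of_le {b r : ℝ≥0∞} (hbr : b ≤ r) (f : H) :
    E.cut b (E.cut r f) = E.cut b f := by
  rw [E.cut_min, min_eq_left hbr]

lemma aux_cut_of_le' {b r : ℝ≥0∞} (hbr : b ≤ r) (f : H) :
    E.cut r (E.cut b f) = E.cut b f := by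
  rw [E.cut_min, min_eq_right hbr]

lemma aux_shiftL_cut (r : ℝ≥0∞) (f : H) : E.shiftL r (E.cut r f) = 0 := by
  apply ext_inner_left ℂ
  intro v
  rw [inner_zero_right, ← E.shiftL_adj, ← E.cut_sa, E.cut_shift, inner_zero_left]

lemma aux_shiftL_sub_cut (r : ℝ≥0∞) (f : H) :
    E.shiftL r (f - E.cut r f) = E.shiftL r f := by
  rw [map_sub, aux_shiftL_cut, sub_zero]

lemma aux_conj_exp_inner {K : Type*} [NormedAddCommGroup K] [InnerProductSpace ℂ K]
    (x y : K) : (starRingEnd ℂ) (Complex.exp ⟪x, y⟫) = Complex.exp ⟪y, x⟫ := by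
  rw [← Complex.exp_conj, inner_conj_symm]

/- measure lemmas -/

lemma aux_meas_add (S : QST E) {A B : Set ℝ≥0∞} (hd : Disjoint A B)
    (hA : MeasurableSet A) (hB : MeasurableSet B) :
    S.meas (A ∪ B) = S.meas A + S.meas B := by
  apply ContinuousLinearMap.ext
  intro y
  apply ext_inner_left ℂ
  intro x
  rw [← S.cm_apply x y (A ∪ B) (hA.union hB), VectorMeasure.of_union hd hA hB,
    S.cm_apply x y A hA, S.cm_apply x y B hB, ContinuousLinearMap.add_apply, inner_add_right]

lemma aux_meas_sa (S : QST E) (A : Set ℝ≥0∞) :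
    ContinuousLinearMap.adjoint (S.meas A) = S.meas A := by
  rw [← ContinuousLinearMap.star_eq_adjoint]
  exact (S.sa A).star_eq

lemma aux_meas_orth (S : QST E) {A B : Set ℝ≥0∞} (hd : Disjoint A B)
    (hA : MeasurableSet A) (hB : MeasurableSet B) :
    S.meas A ∘L S.meas B = 0 := by
  have := proj_orth_mul (S.sa A) (S.sa B) (S.idem A) (S.idem B)
    (by rw [← aux_meas_add S hd hA hB]; exact S.idem (A ∪ B))
  exact this

lemma aux_meas_absorb (S : QST E) {A B : Set ℝ≥0∞} (hsub : A ⊆ B)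
    (hA : MeasurableSet A) (hB : MeasurableSet B) :
    S.meas A ∘L S.meas B = S.meas A := by
  have hdec : S.meas B = S.meas A + S.meas (B \ A) := by
    rw [← aux_meas_add S disjoint_sdiff_self_right hA (hB.diff hA), Set.union_diff_cancel hsub]
  rw [hdec, ContinuousLinearMap.comp_add, S.idem,
    aux_meas_orth S disjoint_sdiff_self_right hA (hB.diff hA), add_zero]

lemma aux_meas_Ioc (S : QST E) {a b : ℝ≥0∞} (hab : a ≤ b) :
    S.meas (Set.Ioc a b) = S.meas (Set.Iic b) - S.meas (Set.Iic a) := by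
  have hd : Disjoint (Set.Iic a) (Set.Ioc a b) :=
    Set.disjoint_left.mpr (fun x hx hx2 => absurd hx2.1 (not_lt.mpr hx))
  have := aux_meas_add S hd measurableSet_Iic measurableSet_Ioc
  rw [Set.Iic_union_Ioc_eq_Iic hab] at this
  rw [this]
  abel

/- adaptedness lemmas -/

lemma aux_adaptedAt_sub {X Y : 𝓕 →L[ℂ] 𝓕} {r : ℝ≥0∞}
    (hX : E.AdaptedAt X r) (hY : E.AdaptedAt Y r) : E.AdaptedAt (X - Y) r := by
  intro f g
  simp only [ContinuousLinearMap.sub_apply, inner_sub_right, hX f g, hY f g]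
  ring

lemma aux_adaptedAt_mono {X : 𝓕 →L[ℂ] 𝓕} {b r : ℝ≥0∞} (hbr : b ≤ r)
    (hX : E.AdaptedAt X b) : E.AdaptedAt X r := by
  intro f g
  rw [hX f g, hX (E.cut r f) (E.cut r g), aux_cut_of_le hbr, aux_cut_of_le hbr]
  rw [mul_assoc, ← Complex.exp_add]
  congr 2
  have hf : E.cut r f - E.cut b f = E.cut r (f - E.cut b f) := by
    rw [map_sub, aux_cut_of_le' hbr]
  have hg : E.cut r g - E.cut b g = E.cut r (g - E.cut b g) := by
    rw [map_sub, aux_cut_of_le' hbr]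
  have e1 : f - E.cut b f = (E.cut r f - E.cut b f) + (f - E.cut r f) := by abel
  have e2 : g - E.cut b g = (E.cut r g - E.cut b g) + (g - E.cut r g) := by abel
  rw [e1, e2, inner_add_left, inner_add_right, inner_add_right]
  have z1 : ⟪E.cut r f - E.cut b f, g - E.cut r g⟫ = 0 := by
    rw [hf]; exact aux_inner_cut_future r _ g
  have z2 : ⟪f - E.cut r f, E.cut r g - E.cut b g⟫ = 0 := by
    rw [hg]; exact aux_inner_future_cut r f _
  rw [z1, z2]
  ring

lemma aux_adapted_Ioc (S : QST E) {a b : ℝ≥0∞} (hab : a ≤ b) (haT : a ≠ ⊤) (hbT : b ≠ ⊤) :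
    E.AdaptedAt (S.meas (Set.Ioc a b)) b := by
  rw [aux_meas_Ioc S hab]
  have h1 : E.AdaptedAt (S.meas (Set.Iic b)) b := S.adapted b hbT
  have h2 : E.AdaptedAt (S.meas (Set.Iic a)) a := S.adapted a haT
  exact aux_adaptedAt_sub h1 (aux_adaptedAt_mono hab h2)

end FrameworkLemmas

/-- Lemma `uni`: for an isometric `p`-adapted cocycle `V`, a
finite quantum stop time `S` and `t ∈ (0, ∞)`, each Riemann sum
`V_{S,π} = Σ_{j=1}^{n+1} V_{π_j} S((π_{j-1}, π_j])` satisfies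
`‖V_{S,π} z‖ ≤ ‖S([0,t]) z‖` for all `z ∈ h ⊗ 𝓕`. -/
theorem cocycle_riemann_sum_bound
    (E : FockSpec H 𝓕) (A : AmpSpec 𝓕 h 𝓚) (S : QST E) (hS : S.Finite)
    (M : Set (h →L[ℂ] h)) (pH : H →L[ℂ] H)
    (hpsa : ∀ f g : H, ⟪pH f, g⟫ = ⟪f, pH g⟫) (hpi : pH ∘L pH = pH)
    (hpc : ∀ (u : ℝ≥0∞) (f : H), E.cut u (pH f) = pH (E.cut u f))
    (Sig : ℝ≥0∞ → (𝓚 →L[ℂ] 𝓚) → 𝓚 →L[ℂ] 𝓚) (hSig : IsAmpCCRFlow E A Sig)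
    (V Vhat : ℝ≥0∞ → 𝓚 →L[ℂ] 𝓚)
    (hVM : ∀ u : ℝ≥0∞, InVNTensor A M (V u))
    (hVp : PAdapted E A pH V) (hhat : IsHatOf E A V Vhat)
    (hiso : IsometricHat Vhat) (hcoc : IsLeftCocycle Sig V Vhat)
    (t : ℝ≥0∞) (ht0 : 0 < t) (htT : t ≠ ⊤) (π : StopPartition t) :
    ∀ z : 𝓚, ‖VSum A S V π z‖ ≤ ‖A.amp (S.meas {s | s ≤ t}) z‖ := by
  intro z
  classical
  set F := π.pts.erase 0 with hF
  -- partition facts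
  have hsT : ∀ s ∈ F, s ≠ ⊤ := fun s hs =>
    ne_top_of_le_ne_top htT (π.mem_le s (Finset.mem_of_mem_erase hs))
  have hs_le_t : ∀ s ∈ F, s ≤ t := fun s hs => π.mem_le s (Finset.mem_of_mem_erase hs)
  have hpred_lt : ∀ s ∈ F, π.pred s < s := by
    intro s hs
    have hpos : (0:ℝ≥0∞) < s := pos_iff_ne_zero.mpr (Finset.ne_of_mem_erase hs)
    exact Finset.sup_lt_iff hpos |>.mpr (fun b hb => (Finset.mem_filter.mp hb).2)
  have hpredT : ∀ s ∈ F, π.pred s ≠ ⊤ := fun s hs => (hpred_lt s hs).trans_le (le_top) |>.ne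
  have hle_pred : ∀ s ∈ F, ∀ s' ∈ F, s < s' → s ≤ π.pred s' := by
    intro s hs s' hs' hss'
    exact Finset.le_sup (f := id)
      (Finset.mem_filter.mpr ⟨Finset.mem_of_mem_erase hs, hss'⟩)
  -- sa helper
  have hsaR : ∀ (R : 𝓕 →L[ℂ] 𝓕), ContinuousLinearMap.adjoint R = R →
      ∀ x y : 𝓕, ⟪R x, y⟫ = ⟪x, R y⟫ := by
    intro R hR x y
    nth_rewrite 1 [← hR]
    exact ContinuousLinearMap.adjoint_inner_left R y x
  -- Vhat isometry facts
  have hVhat_inner : ∀ r : ℝ≥0∞, r ≠ ⊤ → ∀ x y : 𝓚, ⟪Vhat r x, Vhat r y⟫ = ⟪x, y⟫ := by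
    intro r hr x y
    let li : 𝓚 →ₗᵢ[ℂ] 𝓚 := ⟨(Vhat r).toLinearMap, hiso r hr⟩
    exact li.inner_map_map x y
  have hVhatSV : ∀ r : ℝ≥0∞, r ≠ ⊤ →
      ContinuousLinearMap.adjoint (Vhat r) ∘L Vhat r = 1 := by
    intro r hr
    apply ContinuousLinearMap.ext
    intro w
    apply ext_inner_left ℂ
    intro x
    rw [ContinuousLinearMap.comp_apply, ContinuousLinearMap.adjoint_inner_right,
      hVhat_inner r hr, ContinuousLinearMap.one_apply]
  -- the twisted cut
  set ctp : ℝ≥0∞ → H → H := fun r f => E.cut r f + pH (f - E.cut r f) with hctp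
  have hctp_cut : ∀ (r : ℝ≥0∞) (f : H), E.cut r (ctp r f) = E.cut r f := by
    intro r f
    show E.cut r (E.cut r f + pH (f - E.cut r f)) = E.cut r f
    rw [map_add, aux_cut_cut, hpc, aux_cut_sub_cut, map_zero, add_zero]
  have hctp_sub : ∀ (r : ℝ≥0∞) (f : H), ctp r f - E.cut r (ctp r f) = pH (f - E.cut r f) := by
    intro r f
    rw [hctp_cut]
    show E.cut r f + pH (f - E.cut r f) - E.cut r f = _
    abel
  have hpH_idem : ∀ x : H, pH (pH x) = pH x := by
    intro x
    have := congrArg (fun (X : H →L[ℂ] H) => X x) hpi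
    simpa using this
  have hctp_idem : ∀ (r : ℝ≥0∞) (f : H), ctp r (ctp r f) = ctp r f := by
    intro r f
    show E.cut r (ctp r f) + pH (ctp r f - E.cut r (ctp r f)) = ctp r f
    rw [hctp_sub, hctp_cut, hpH_idem]
  have hctp_inner : ∀ (r : ℝ≥0∞) (f g : H), ⟪ctp r f, g⟫ = ⟪f, ctp r g⟫ := by
    intro r f g
    show ⟪E.cut r f + pH (f - E.cut r f), g⟫ = ⟪f, E.cut r g + pH (g - E.cut r g)⟫
    rw [inner_add_left, inner_add_right, E.cut_sa]
    congr 1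
    rw [hpsa, inner_sub_left, E.cut_sa, hpc, map_sub, inner_sub_right]
  -- V = Vhat ∘ projection
  have hV_eV : ∀ r : ℝ≥0∞, r ≠ ⊤ → ∀ (v : h) (g : H),
      V r (A.tens v (E.eV g)) = Vhat r (A.tens v (E.eV (ctp r g))) := by
    intro r hr v g
    apply aux_tensEV_vec_ext (E := E) A
    intro u f
    rw [hVp r hr u v f g, hhat r hr u v f (ctp r g), hctp_sub, hctp_cut]
  set Pr : ℝ≥0∞ → 𝓚 →L[ℂ] 𝓚 :=
    fun r => ContinuousLinearMap.adjoint (Vhat r) ∘L V r with hPrdef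
  have hPr_eV : ∀ r : ℝ≥0∞, r ≠ ⊤ → ∀ (v : h) (g : H),
      Pr r (A.tens v (E.eV g)) = A.tens v (E.eV (ctp r g)) := by
    intro r hr v g
    show (ContinuousLinearMap.adjoint (Vhat r) ∘L V r) (A.tens v (E.eV g)) = _
    rw [ContinuousLinearMap.comp_apply, hV_eV r hr v g]
    have h2 := congrArg (fun (X : 𝓚 →L[ℂ] 𝓚) => X (A.tens v (E.eV (ctp r g)))) (hVhatSV r hr)
    simpa using h2
  have hV_fact : ∀ r : ℝ≥0∞, r ≠ ⊤ → V r = Vhat r ∘L Pr r := by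
    intro r hr
    apply aux_tensEV_clm_ext (E := E) A
    intro v g
    rw [ContinuousLinearMap.comp_apply, hPr_eV r hr v g, hV_eV r hr v g]
  have hPr_sa : ∀ r : ℝ≥0∞, r ≠ ⊤ → ContinuousLinearMap.adjoint (Pr r) = Pr r := by
    intro r hr
    apply aux_mat_ext (E := E) A
    intro u f v g
    rw [ContinuousLinearMap.adjoint_inner_right, hPr_eV r hr, hPr_eV r hr,
      A.inner_tens, A.inner_tens, E.inner_eV, E.inner_eV, hctp_inner]
  have hPr_idem : ∀ r : ℝ≥0∞, r ≠ ⊤ → Pr r ∘L Pr r = Pr r := by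
    intro r hr
    apply aux_tensEV_clm_ext (E := E) A
    intro v g
    rw [ContinuousLinearMap.comp_apply, hPr_eV r hr, hPr_eV r hr, hctp_idem]
  have hV_contr : ∀ r : ℝ≥0∞, r ≠ ⊤ → ∀ w : 𝓚, ‖V r w‖ ≤ ‖w‖ := by
    intro r hr w
    have h1 : V r w = Vhat r (Pr r w) := by rw [hV_fact r hr]; rfl
    rw [h1, hiso r hr]
    exact sa_idem_contraction (hPr_sa r hr) (hPr_idem r hr) w
  -- Sig adjoint
  have hSig_adj : ∀ r : ℝ≥0∞, r ≠ ⊤ → ∀ X : 𝓚 →L[ℂ] 𝓚,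
      ContinuousLinearMap.adjoint (Sig r X) = Sig r (ContinuousLinearMap.adjoint X) := by
    intro r hr X
    apply aux_mat_ext (E := E) A
    intro u f v g
    rw [ContinuousLinearMap.adjoint_inner_right (Sig r X) (A.tens u (E.eV f)) (A.tens v (E.eV g)),
      ← inner_conj_symm ((Sig r X) (A.tens u (E.eV f))) (A.tens v (E.eV g)),
      hSig r hr X v u g f, map_mul, aux_conj_exp_inner, inner_conj_symm,
      ← ContinuousLinearMap.adjoint_inner_right X (A.tens u (E.eV (E.shiftL r f)))
        (A.tens v (E.eV (E.shiftL r g))),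
      hSig r hr (ContinuousLinearMap.adjoint X) u v f g]
  -- the past-insertion identities
  have hpast_adj_eV : ∀ (g : H) (r : ℝ≥0∞) (k : H),
      ContinuousLinearMap.adjoint (E.past g r) (E.eV k)
        = Complex.exp ⟪E.cut r g, k⟫ • E.eV (k - E.cut r k) := by
    intro g r k
    apply aux_eV_vec_ext E
    intro f'
    rw [ContinuousLinearMap.adjoint_inner_right, E.past_eV, E.inner_eV, inner_smul_right,
      E.inner_eV, ← Complex.exp_add]
    congr 1
    rw [inner_sub_left, inner_add_left, inner_sub_right, E.cut_sa, E.cut_sa]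
    ring
  have hSigPast : ∀ r : ℝ≥0∞, r ≠ ⊤ → ∀ (X : 𝓚 →L[ℂ] 𝓚) (v : h) (g : H),
      Sig r X (A.tens v (E.eV g))
        = A.amp (E.past g r) (Sig r X (A.tens v (E.eV (g - E.cut r g)))) := by
    intro r hr X v g
    apply aux_tensEV_vec_ext (E := E) A
    intro a k
    rw [hSig r hr X a v k g,
      ← ContinuousLinearMap.adjoint_inner_left (A.amp (E.past g r))
        (Sig r X (A.tens v (E.eV (g - E.cut r g)))) (A.tens a (E.eV k)),
      aux_amp_adjoint, A.amp_tens, hpast_adj_eV, _root_.map_smul, inner_smul_left,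
      aux_conj_exp_inner, hSig r hr X a v (k - E.cut r k) (g - E.cut r g),
      aux_cut_sub_cut, aux_cut_sub_cut, inner_zero_left, Complex.exp_zero, one_mul,
      aux_shiftL_sub_cut, aux_shiftL_sub_cut, aux_inner_cut_cut]
  -- adjoint of past applied to adapted vectors
  have hpast_adj_R : ∀ (r : ℝ≥0∞) (R : 𝓕 →L[ℂ] 𝓕), E.AdaptedAt R r → ∀ (hh g : H),
      ContinuousLinearMap.adjoint (E.past hh r) (R (E.eV g))
        = ⟪E.eV (E.cut r hh), R (E.eV (E.cut r g))⟫ • E.eV (g - E.cut r g) := by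
    intro r R hRad hh g
    apply aux_eV_vec_ext E
    intro k
    rw [ContinuousLinearMap.adjoint_inner_right, E.past_eV, hRad (E.cut r hh + k - E.cut r k) g,
      inner_smul_right]
    have e1 : E.cut r (E.cut r hh + k - E.cut r k) = E.cut r hh := by
      rw [map_sub, map_add, aux_cut_cut, aux_cut_cut]
      abel
    rw [e1]
    have e2 : E.cut r hh + k - E.cut r k - E.cut r hh = k - E.cut r k := by abel
    rw [e2, E.inner_eV]
    have e3 : ⟪k, g - E.cut r g⟫ = ⟪k - E.cut r k, g - E.cut r g⟫ := by
      rw [inner_sub_left, aux_inner_cut_future, sub_zero]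
    rw [e3]
  -- commutation of adapted amps with Sig
  have hcommSig : ∀ r : ℝ≥0∞, r ≠ ⊤ → ∀ (X : 𝓚 →L[ℂ] 𝓚) (R : 𝓕 →L[ℂ] 𝓕),
      ContinuousLinearMap.adjoint R = R → E.AdaptedAt R r →
      A.amp R ∘L Sig r X = Sig r X ∘L A.amp R := by
    intro r hr X R hRsa hRad
    apply aux_mat_ext (E := E) A
    intro a k v g
    have L : ⟪A.tens a (E.eV k), (A.amp R ∘L Sig r X) (A.tens v (E.eV g))⟫
        = ⟪E.eV (E.cut r k), R (E.eV (E.cut r g))⟫ *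
          ⟪A.tens a (E.eV (k - E.cut r k)), Sig r X (A.tens v (E.eV (g - E.cut r g)))⟫ := by
      rw [ContinuousLinearMap.comp_apply,
        ← aux_amp_inner_left A hRsa (A.tens a (E.eV k)) (Sig r X (A.tens v (E.eV g))),
        A.amp_tens, hSigPast r hr X v g,
        ← ContinuousLinearMap.adjoint_inner_left (A.amp (E.past g r))
          (Sig r X (A.tens v (E.eV (g - E.cut r g)))) (A.tens a (R (E.eV k))),
        aux_amp_adjoint, A.amp_tens, hpast_adj_R r R hRad g k, _root_.map_smul,
        inner_smul_left, inner_conj_symm, hsaR R hRsa]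
    have Rr : ⟪A.tens a (E.eV k), (Sig r X ∘L A.amp R) (A.tens v (E.eV g))⟫
        = ⟪E.eV (E.cut r k), R (E.eV (E.cut r g))⟫ *
          ⟪A.tens a (E.eV (k - E.cut r k)), Sig r X (A.tens v (E.eV (g - E.cut r g)))⟫ := by
      rw [ContinuousLinearMap.comp_apply, A.amp_tens,
        ← ContinuousLinearMap.adjoint_inner_left (Sig r X) (A.tens v (R (E.eV g)))
          (A.tens a (E.eV k)),
        hSig_adj r hr X, hSigPast r hr (ContinuousLinearMap.adjoint X) a k,
        ← ContinuousLinearMap.adjoint_inner_right (A.amp (E.past k r))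
          (Sig r (ContinuousLinearMap.adjoint X) (A.tens a (E.eV (k - E.cut r k))))
          (A.tens v (R (E.eV g))),
        aux_amp_adjoint, A.amp_tens, hpast_adj_R r R hRad k g, _root_.map_smul,
        inner_smul_right,
        ← ContinuousLinearMap.adjoint_inner_left (Sig r X)
          (A.tens v (E.eV (g - E.cut r g))) (A.tens a (E.eV (k - E.cut r k))),
        hSig_adj r hr X]
    rw [L, Rr]
  -- commutation of adapted amps with Pr
  have hcommPr : ∀ r : ℝ≥0∞, r ≠ ⊤ → ∀ (R : 𝓕 →L[ℂ] 𝓕),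
      ContinuousLinearMap.adjoint R = R → E.AdaptedAt R r →
      A.amp R ∘L Pr r = Pr r ∘L A.amp R := by
    intro r hr R hRsa hRad
    apply aux_mat_ext (E := E) A
    intro u f v g
    have L : ⟪A.tens u (E.eV f), (A.amp R ∘L Pr r) (A.tens v (E.eV g))⟫
        = ⟪u, v⟫ * ⟪E.eV f, R (E.eV (ctp r g))⟫ := by
      rw [ContinuousLinearMap.comp_apply, hPr_eV r hr, A.amp_tens, A.inner_tens]
    have Rr : ⟪A.tens u (E.eV f), (Pr r ∘L A.amp R) (A.tens v (E.eV g))⟫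
        = ⟪u, v⟫ * ⟪E.eV (ctp r f), R (E.eV g)⟫ := by
      rw [ContinuousLinearMap.comp_apply, A.amp_tens,
        ← ContinuousLinearMap.adjoint_inner_left (Pr r) (A.tens v (R (E.eV g)))
          (A.tens u (E.eV f)),
        hPr_sa r hr, hPr_eV r hr, A.inner_tens]
    rw [L, Rr]
    congr 1
    rw [hRad f (ctp r g), hRad (ctp r f) g, hctp_sub, hctp_cut, hctp_sub, hctp_cut]
    congr 1
    rw [← hpsa, map_sub]
  -- interval projections
  have hRsa : ∀ s ∈ F, ContinuousLinearMap.adjoint (S.meas (Set.Ioc (π.pred s) s))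
      = S.meas (Set.Ioc (π.pred s) s) := fun s _ => aux_meas_sa S _
  have hRad : ∀ s ∈ F, E.AdaptedAt (S.meas (Set.Ioc (π.pred s) s)) s := fun s hs =>
    aux_adapted_Ioc S (le_of_lt (hpred_lt s hs)) (hpredT s hs) (hsT s hs)
  have hdisj : ∀ s ∈ F, ∀ s' ∈ F, s < s' →
      Disjoint (Set.Ioc (π.pred s) s) (Set.Ioc (π.pred s') s') := by
    intro s hs s' hs' hss'
    apply Set.disjoint_left.mpr
    intro x hx hx'
    exact absurd (lt_of_le_of_lt (hx.2.trans (hle_pred s hs s' hs' hss')) hx'.1) (lt_irrefl x)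
  have horth : ∀ s ∈ F, ∀ s' ∈ F, s ≠ s' →
      S.meas (Set.Ioc (π.pred s) s) ∘L S.meas (Set.Ioc (π.pred s') s') = 0 := by
    intro s hs s' hs' hne
    rcases lt_or_gt_of_ne hne with hlt | hgt
    · exact aux_meas_orth S (hdisj s hs s' hs' hlt) measurableSet_Ioc measurableSet_Ioc
    · exact aux_meas_orth S ((hdisj s' hs' s hs hgt).symm) measurableSet_Ioc measurableSet_Ioc
  -- the cross terms vanish
  have hcross : ∀ s ∈ F, ∀ s' ∈ F, s < s' →
      ⟪V s (A.amp (S.meas (Set.Ioc (π.pred s) s)) z),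
        V s' (A.amp (S.meas (Set.Ioc (π.pred s') s')) z)⟫ = 0 := by
    intro s hs s' hs' hss'
    have hsT' : s ≠ ⊤ := hsT s hs
    have hdT : s' - s ≠ ⊤ := ne_top_of_le_ne_top (hsT s' hs') tsub_le_self
    have hcocy : V s' = Vhat s ∘L Sig s (V (s' - s)) := by
      have hc := hcoc s (s' - s) hsT' hdT
      rwa [add_tsub_cancel_of_le (le_of_lt hss')] at hc
    have hT : ContinuousLinearMap.adjoint (V s) ∘L V s'
        = Pr s ∘L Sig s (V (s' - s)) := by
      rw [hcocy, hV_fact s hsT', ContinuousLinearMap.adjoint_comp, hPr_sa s hsT',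
        ContinuousLinearMap.comp_assoc]
      congr 1
      rw [← ContinuousLinearMap.comp_assoc, hVhatSV s hsT', ContinuousLinearMap.one_def,
        ContinuousLinearMap.id_comp]
    set Rs := S.meas (Set.Ioc (π.pred s) s) with hRs
    set Rs' := S.meas (Set.Ioc (π.pred s') s') with hRs'
    have hRsa' : ContinuousLinearMap.adjoint Rs = Rs := by rw [hRs]; exact hRsa s hs
    have hRad' : E.AdaptedAt Rs s := by rw [hRs]; exact hRad s hs
    have horth' : Rs ∘L Rs' = 0 := by rw [hRs, hRs']; exact horth s hs s' hs' (ne_of_lt hss')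
    have hcommT : A.amp Rs ∘L (Pr s ∘L Sig s (V (s' - s)))
        = (Pr s ∘L Sig s (V (s' - s))) ∘L A.amp Rs := by
      rw [← ContinuousLinearMap.comp_assoc, hcommPr s hsT' Rs hRsa' hRad',
        ContinuousLinearMap.comp_assoc, hcommSig s hsT' (V (s' - s)) Rs hRsa' hRad',
        ← ContinuousLinearMap.comp_assoc]
    have step1 : ⟪V s (A.amp Rs z), V s' (A.amp Rs' z)⟫
        = ⟪A.amp Rs z, (ContinuousLinearMap.adjoint (V s) ∘L V s') (A.amp Rs' z)⟫ := by
      rw [ContinuousLinearMap.comp_apply,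
        ContinuousLinearMap.adjoint_inner_right (V s) (A.amp Rs z) (V s' (A.amp Rs' z))]
    rw [step1, hT,
      aux_amp_inner_left A hRsa' z ((Pr s ∘L Sig s (V (s' - s))) (A.amp Rs' z))]
    have step3 : A.amp Rs ((Pr s ∘L Sig s (V (s' - s))) (A.amp Rs' z))
        = (Pr s ∘L Sig s (V (s' - s))) ((A.amp Rs ∘L A.amp Rs') z) := by
      have h5 := congrArg (fun (X : 𝓚 →L[ℂ] 𝓚) => X (A.amp Rs' z)) hcommT
      simpa using h5
    rw [step3, aux_amp_comp, horth', aux_amp_zero,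
      ContinuousLinearMap.zero_apply, map_zero, inner_zero_right]
  -- assemble
  have hIic : {s : ℝ≥0∞ | s ≤ t} = Set.Iic t := rfl
  set y : 𝓚 := A.amp (S.meas {s : ℝ≥0∞ | s ≤ t}) z with hy
  have hQy : ∀ s ∈ F, A.amp (S.meas (Set.Ioc (π.pred s) s)) z
      = A.amp (S.meas (Set.Ioc (π.pred s) s)) y := by
    intro s hs
    have habs : S.meas (Set.Ioc (π.pred s) s) ∘L S.meas {u : ℝ≥0∞ | u ≤ t}
        = S.meas (Set.Ioc (π.pred s) s) := by
      rw [hIic]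
      exact aux_meas_absorb S (fun x hx => hx.2.trans (hs_le_t s hs))
        measurableSet_Ioc measurableSet_Iic
    calc A.amp (S.meas (Set.Ioc (π.pred s) s)) z
        = A.amp (S.meas (Set.Ioc (π.pred s) s) ∘L S.meas {u : ℝ≥0∞ | u ≤ t}) z := by rw [habs]
    _ = A.amp (S.meas (Set.Ioc (π.pred s) s)) y := by rw [← aux_amp_comp]; rfl
  have hsum_apply : VSum A S V π z
      = ∑ s ∈ F, V s (A.amp (S.meas (Set.Ioc (π.pred s) s)) z) := by
    rw [VSum, ← hF, ContinuousLinearMap.sum_apply]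
    exact Finset.sum_congr rfl (fun s _ => rfl)
  -- diagonal expansion
  have hterm_cross : ∀ s ∈ F, ∀ b ∈ F, b ≠ s →
      ⟪V s (A.amp (S.meas (Set.Ioc (π.pred s) s)) z),
        V b (A.amp (S.meas (Set.Ioc (π.pred b) b)) z)⟫ = 0 := by
    intro s hs b hb hbs
    rcases lt_or_gt_of_ne (hbs.symm) with hlt | hgt
    · exact hcross s hs b hb hlt
    · rw [← inner_conj_symm, hcross b hb s hs hgt, map_zero]
  have hnormsq : ‖∑ s ∈ F, V s (A.amp (S.meas (Set.Ioc (π.pred s) s)) z)‖ ^ 2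
      = ∑ s ∈ F, ‖V s (A.amp (S.meas (Set.Ioc (π.pred s) s)) z)‖ ^ 2 := by
    have h1 : ⟪∑ s ∈ F, V s (A.amp (S.meas (Set.Ioc (π.pred s) s)) z),
        ∑ s ∈ F, V s (A.amp (S.meas (Set.Ioc (π.pred s) s)) z)⟫
        = ∑ s ∈ F, ⟪V s (A.amp (S.meas (Set.Ioc (π.pred s) s)) z),
            V s (A.amp (S.meas (Set.Ioc (π.pred s) s)) z)⟫ := by
      rw [sum_inner]
      refine Finset.sum_congr rfl ?_
      intro s hs
      rw [inner_sum]
      exact Finset.sum_eq_single_of_mem s hs (fun b hb hbs => hterm_cross s hs b hb hbs)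
    rw [norm_sq_eq_re_inner (𝕜 := ℂ), h1, map_sum]
    exact Finset.sum_congr rfl (fun s _ => (norm_sq_eq_re_inner (𝕜 := ℂ) _).symm)
  have hstep1 : ∑ s ∈ F, ‖V s (A.amp (S.meas (Set.Ioc (π.pred s) s)) z)‖ ^ 2
      ≤ ∑ s ∈ F, ‖A.amp (S.meas (Set.Ioc (π.pred s) s)) y‖ ^ 2 := by
    apply Finset.sum_le_sum
    intro s hs
    have h2 : ‖V s (A.amp (S.meas (Set.Ioc (π.pred s) s)) z)‖
        ≤ ‖A.amp (S.meas (Set.Ioc (π.pred s) s)) y‖ := by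
      rw [← hQy s hs]
      exact hV_contr s (hsT s hs) _
    exact pow_le_pow_left₀ (norm_nonneg _) h2 2
  -- the sum of the interval projections
  have hQsa : ∀ s ∈ F, ContinuousLinearMap.adjoint (A.amp (S.meas (Set.Ioc (π.pred s) s)))
      = A.amp (S.meas (Set.Ioc (π.pred s) s)) := by
    intro s hs
    rw [aux_amp_adjoint, hRsa s hs]
  have hQidem : ∀ s ∈ F, A.amp (S.meas (Set.Ioc (π.pred s) s))
      ∘L A.amp (S.meas (Set.Ioc (π.pred s) s)) = A.amp (S.meas (Set.Ioc (π.pred s) s)) := by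
    intro s hs
    rw [aux_amp_comp, S.idem]
  have hterm_sq : ∀ s ∈ F, ‖A.amp (S.meas (Set.Ioc (π.pred s) s)) y‖ ^ 2
      = RCLike.re ⟪y, A.amp (S.meas (Set.Ioc (π.pred s) s)) y⟫ := by
    intro s hs
    rw [norm_sq_eq_re_inner (𝕜 := ℂ)]
    congr 1
    rw [aux_amp_inner_left A (hRsa s hs) y (A.amp (S.meas (Set.Ioc (π.pred s) s)) y)]
    congr 1
    have h4 := congrArg (fun (X : 𝓚 →L[ℂ] 𝓚) => X y) (hQidem s hs)
    simpa using h4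
  set Qs : 𝓚 →L[ℂ] 𝓚 := ∑ s ∈ F, A.amp (S.meas (Set.Ioc (π.pred s) s)) with hQs
  have hQs_sa : ContinuousLinearMap.adjoint Qs = Qs := by
    rw [hQs, map_sum]
    exact Finset.sum_congr rfl (fun s hs => hQsa s hs)
  have hQs_idem : Qs ∘L Qs = Qs := by
    have hmul : Qs * Qs = Qs := by
      rw [hQs, Finset.sum_mul_sum]
      refine Finset.sum_congr rfl ?_
      intro s hs
      refine Finset.sum_eq_single_of_mem s hs ?_ |>.trans (hQidem s hs)
      intro b hb hbs
      have : A.amp (S.meas (Set.Ioc (π.pred s) s)) ∘L A.amp (S.meas (Set.Ioc (π.pred b) b))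
          = 0 := by
        rw [aux_amp_comp, horth s hs b hb (fun hsb => hbs (hsb.symm)), aux_amp_zero]
      exact this
    exact hmul
  have hy_bound : ∑ s ∈ F, ‖A.amp (S.meas (Set.Ioc (π.pred s) s)) y‖ ^ 2 ≤ ‖y‖ ^ 2 := by
    have h1 : ∑ s ∈ F, ‖A.amp (S.meas (Set.Ioc (π.pred s) s)) y‖ ^ 2
        = RCLike.re ⟪y, Qs y⟫ := by
      rw [Finset.sum_congr rfl (fun s hs => hterm_sq s hs), ← map_sum, ← inner_sum, hQs,
        ContinuousLinearMap.sum_apply]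
    rw [h1]
    calc RCLike.re ⟪y, Qs y⟫ ≤ ‖⟪y, Qs y⟫‖ := RCLike.re_le_norm _
    _ ≤ ‖y‖ * ‖Qs y‖ := norm_inner_le_norm _ _
    _ ≤ ‖y‖ * ‖y‖ := mul_le_mul_of_nonneg_left
        (sa_idem_contraction hQs_sa hQs_idem y) (norm_nonneg y)
    _ = ‖y‖ ^ 2 := by ring
  have final_sq : ‖VSum A S V π z‖ ^ 2 ≤ ‖y‖ ^ 2 := by
    rw [hsum_apply, hnormsq]
    exact le_trans hstep1 hy_bound
  calc ‖VSum A S V π z‖ = Real.sqrt (‖VSum A S V π z‖ ^ 2) :=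
        (Real.sqrt_sq (norm_nonneg _)).symm
  _ ≤ Real.sqrt (‖y‖ ^ 2) := Real.sqrt_le_sqrt final_sq
  _ = ‖y‖ := Real.sqrt_sq (norm_nonneg _)

end
end
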